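/- arXiv:1501.05798 — 3 statements merged into one kernel-verified Lean document; each statement's English description precedes it below -/
import Mathlib

section
/- For each n, let there be n_I initially infective vertices i = 1,…,n_I with degrees d_i^I, let X_{I,0} := Σ_i d_i^I and d_{I,max} := max_i d_i^I, and suppose ρ_n/β_n = O(1) and X_{I,0} → ∞. Let R_1,…,R_{n_I} be independent Exp(ρ_n) random variables, and conditionally on R_i, let Z_{0,i} have the Binomial(d_i^I, 1 − e^{−β_n R_i}) distribution (the number of half-edges at vertex i whose independent Exp(β_n) pairing time precedes R_i), with Z_{0,1},…,Z_{0,n_I} independent; set Z_0 := Σ_i Z_{0,i} and π_n := β_n/(β_n+ρ_n). Then: (i) if d_{I,max} = o(X_{I,0}), then Z_0 = π_n X_{I,0} (1 + o_p(1)); (ii) in general, lim_{δ→0} limsup_{n→∞} P(Z_0 ≤ δ X_{I,0}) = 0. -/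
open MeasureTheory Filter Topology Asymptotics Set
open scoped ENNReal NNReal
noncomputable section

-- bernstein basis as real function
def bb (d j : ℕ) (x : ℝ) : ℝ := (d.choose j : ℝ) * x ^ j * (1 - x) ^ (d - j)

lemma bb_nonneg {d j : ℕ} {x : ℝ} (h0 : 0 ≤ x) (h1 : x ≤ 1) : 0 ≤ bb d j x := by
  unfold bb
  have : (0:ℝ) ≤ 1 - x := by linarith
  positivity

lemma bb_eval (d j : ℕ) (x : ℝ) : (bernsteinPolynomial ℝ d j).eval x = bb d j x := by
  simp [bernsteinPolynomial, bb]

lemma bb_sum (d : ℕ) (x : ℝ) : ∑ j ∈ Finset.range (d+1), bb d j x = 1 := by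
  have := congrArg (Polynomial.eval x) (bernsteinPolynomial.sum ℝ d)
  simpa [Polynomial.eval_finset_sum, bb_eval] using this

lemma bb_sum_mul (d : ℕ) (x : ℝ) :
    ∑ j ∈ Finset.range (d+1), (j : ℝ) * bb d j x = d * x := by
  have := congrArg (Polynomial.eval x) (bernsteinPolynomial.sum_smul ℝ d)
  simpa [Polynomial.eval_finset_sum, bb_eval, mul_comm] using this

lemma bb_sum_var (d : ℕ) (x : ℝ) :
    ∑ j ∈ Finset.range (d+1), ((d : ℝ) * x - j) ^ 2 * bb d j x = d * x * (1 - x) := by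
  have := congrArg (Polynomial.eval x) (bernsteinPolynomial.variance ℝ d)
  simpa [Polynomial.eval_finset_sum, bb_eval, mul_comm] using this

lemma int_exp_Ioi (a : ℝ) (ha : 0 < a) :
    ∫ r in Ioi (0:ℝ), Real.exp (-(a * r)) = 1 / a := by
  have := integral_comp_mul_left_Ioi (fun x => Real.exp (-x)) 0 ha
  simp only [mul_zero] at this
  rw [show (fun r => Real.exp (-(a * r))) = (fun r => Real.exp (-(a * r))) from rfl]
  calc ∫ r in Ioi (0:ℝ), Real.exp (-(a * r))
      = a⁻¹ • ∫ x in Ioi (0:ℝ), Real.exp (-x) := this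
    _ = 1 / a := by
        rw [integral_exp_neg_Ioi_zero]
        simp [one_div]

lemma integrableOn_exp_rate (a : ℝ) (ha : 0 < a) :
    IntegrableOn (fun r => Real.exp (-(a * r))) (Ioi (0:ℝ)) := by
  simpa [neg_mul, mul_comm] using exp_neg_integrableOn_Ioi 0 ha

lemma int_exp_Ioc (a r0 : ℝ) (ha : 0 < a) (hr0 : 0 ≤ r0) :
    ∫ r in Ioc (0:ℝ) r0, a * Real.exp (-(a * r)) = 1 - Real.exp (-(a * r0)) := by
  rw [← intervalIntegral.integral_of_le hr0]
  have : ∀ x ∈ Set.uIcc (0:ℝ) r0, HasDerivAt (fun r => -Real.exp (-(a * r)))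
      (a * Real.exp (-(a * x))) x := by
    intro x _
    have h1 : HasDerivAt (fun r : ℝ => -(a * r)) (-a) x := by
      simpa using ((hasDerivAt_id x).const_mul a).fun_neg
    have := (Real.hasDerivAt_exp (-(a * x))).comp x h1
    simpa [mul_comm] using this.fun_neg
  have hcont : ContinuousOn (fun x => a * Real.exp (-(a * x))) (Set.uIcc 0 r0) := by
    fun_prop
  rw [intervalIntegral.integral_eq_sub_of_hasDerivAt this (hcont.intervalIntegrable)]
  simp; ring

section Law
variable {Ω : Type} [MeasurableSpace Ω] (P : Measure Ω) [IsProbabilityMeasure P]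
  (Z : Ω → ℕ) (d : ℕ) (rr bb' : ℝ)

lemma integral_nat_cast_eq_sum (hZ : Measurable Z) (hle : ∀ ω, Z ω ≤ d) :
    ∫ ω, (Z ω : ℝ) ∂P = ∑ j ∈ Finset.range (d+1), (j:ℝ) * (P {ω | Z ω = j}).toReal := by
  have hms : ∀ j : ℕ, MeasurableSet {ω | Z ω = j} := fun j => hZ (measurableSet_singleton j)
  have hfun : ∀ ω, (Z ω : ℝ) =
      ∑ j ∈ Finset.range (d+1), Set.indicator {ω | Z ω = j} (fun _ => (j:ℝ)) ω := by
    intro ω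
    rw [Finset.sum_eq_single (Z ω)]
    · simp [Set.indicator_of_mem, Set.mem_setOf_eq]
    · intro j _ hj
      exact Set.indicator_of_notMem (by simp [Ne.symm hj]) _
    · intro h
      exact absurd (Finset.mem_range.2 (Nat.lt_succ_of_le (hle ω))) h
  calc ∫ ω, (Z ω : ℝ) ∂P
      = ∫ ω, ∑ j ∈ Finset.range (d+1),
          Set.indicator {ω | Z ω = j} (fun _ => (j:ℝ)) ω ∂P := by
        exact integral_congr_ae (Filter.Eventually.of_forall hfun)
    _ = ∑ j ∈ Finset.range (d+1), ∫ ω,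
          Set.indicator {ω | Z ω = j} (fun _ => (j:ℝ)) ω ∂P := by
        refine integral_finset_sum _ fun j _ => ?_
        exact (integrable_const (j:ℝ)).indicator (hms j)
    _ = ∑ j ∈ Finset.range (d+1), (j:ℝ) * (P {ω | Z ω = j}).toReal := by
        refine Finset.sum_congr rfl fun j _ => ?_
        rw [integral_indicator_const _ (hms j)]
        simp [mul_comm, Measure.real]

end Law

section Law2
variable {Ω : Type} [MeasurableSpace Ω] (P : Measure Ω) [IsProbabilityMeasure P]
  (Z : Ω → ℕ) (d : ℕ) {rr bb' : ℝ}

lemma x_mem (hb : 0 < bb') {r : ℝ} (hr : 0 < r) :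
    0 ≤ 1 - Real.exp (-(bb' * r)) ∧ 1 - Real.exp (-(bb' * r)) ≤ 1 := by
  constructor
  · have : Real.exp (-(bb' * r)) ≤ 1 := Real.exp_le_one_iff.2 (by nlinarith)
    linarith
  · have : 0 < Real.exp (-(bb' * r)) := Real.exp_pos _
    linarith

lemma integrable_term (hr : 0 < rr) (hb : 0 < bb') (j : ℕ) :
    IntegrableOn (fun r => rr * Real.exp (-(rr * r)) * bb d j (1 - Real.exp (-(bb' * r))))
      (Ioi (0:ℝ)) := by
  refine Integrable.mono' ((integrableOn_exp_rate rr hr).const_mul (rr * d.choose j)) ?_ ?_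
  · apply Measurable.aestronglyMeasurable
    unfold bb
    fun_prop
  · filter_upwards [ae_restrict_mem measurableSet_Ioi] with r hrm
    obtain ⟨h0, h1⟩ := x_mem hb hrm
    have hbb0 : 0 ≤ bb d j (1 - Real.exp (-(bb' * r))) := bb_nonneg h0 h1
    have hbb1 : bb d j (1 - Real.exp (-(bb' * r))) ≤ d.choose j := by
      unfold bb
      have e0 : (0:ℝ) ≤ 1 - (1 - Real.exp (-(bb' * r))) := by linarith
      have t1 : (1 - Real.exp (-(bb' * r))) ^ j ≤ 1 := pow_le_one₀ h0 h1
      have t2 : (1 - (1 - Real.exp (-(bb' * r)))) ^ (d - j) ≤ 1 := pow_le_one₀ e0 (by linarith)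
      have t3 : (0:ℝ) ≤ (1 - Real.exp (-(bb' * r))) ^ j := pow_nonneg h0 j
      have t4 : (0:ℝ) ≤ (1 - (1 - Real.exp (-(bb' * r)))) ^ (d - j) := pow_nonneg e0 (d - j)
      have t5 : (0:ℝ) ≤ (d.choose j : ℝ) := Nat.cast_nonneg _
      calc (d.choose j : ℝ) * (1 - Real.exp (-(bb' * r))) ^ j *
            (1 - (1 - Real.exp (-(bb' * r)))) ^ (d - j)
          ≤ (d.choose j : ℝ) * 1 * 1 :=
            mul_le_mul (mul_le_mul le_rfl t1 t3 t5) t2 t4 (mul_nonneg t5 zero_le_one)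
        _ = _ := by ring
    have hexp : 0 < Real.exp (-(rr * r)) := Real.exp_pos _
    rw [Real.norm_eq_abs, abs_of_nonneg (by positivity)]
    calc rr * Real.exp (-(rr * r)) * bb d j (1 - Real.exp (-(bb' * r)))
        ≤ rr * Real.exp (-(rr * r)) * d.choose j := by
          have h2 : 0 ≤ rr * Real.exp (-(rr * r)) := by positivity
          exact mul_le_mul_of_nonneg_left hbb1 h2
      _ = rr * d.choose j * Real.exp (-(rr * r)) := by ring

lemma law_event (hr : 0 < rr) (hb : 0 < bb') (hZ : Measurable Z)
    (hlaw' : ∀ j : ℕ, P {ω | Z ω = j} = ENNReal.ofReal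
      (∫ r in Ioi (0:ℝ), rr * Real.exp (-(rr * r)) *
        ((d.choose j) * (1 - Real.exp (-(bb' * r))) ^ j * Real.exp (-(bb' * r)) ^ (d - j))))
    (s : Finset ℕ) :
    P {ω | Z ω ∈ s} = ENNReal.ofReal
      (∫ r in Ioi (0:ℝ), rr * Real.exp (-(rr * r)) *
        ∑ j ∈ s, bb d j (1 - Real.exp (-(bb' * r)))) := by
  have hlaw2 : ∀ j : ℕ, P {ω | Z ω = j} = ENNReal.ofReal
      (∫ r in Ioi (0:ℝ), rr * Real.exp (-(rr * r)) * bb d j (1 - Real.exp (-(bb' * r)))) := by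
    intro j
    rw [hlaw' j]
    congr 1
    refine setIntegral_congr_fun measurableSet_Ioi fun r hrm => ?_
    unfold bb
    have : 1 - (1 - Real.exp (-(bb' * r))) = Real.exp (-(bb' * r)) := by ring
    rw [this]
  have hms : ∀ j : ℕ, MeasurableSet {ω | Z ω = j} := fun j => hZ (measurableSet_singleton j)
  have hset : {ω | Z ω ∈ s} = ⋃ j ∈ s, {ω | Z ω = j} := by
    ext ω; simp
  rw [hset, measure_biUnion_finset ?_ (fun j _ => hms j)]
  · calc ∑ j ∈ s, P {ω | Z ω = j}
        = ∑ j ∈ s, ENNReal.ofReal (∫ r in Ioi (0:ℝ),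
            rr * Real.exp (-(rr * r)) * bb d j (1 - Real.exp (-(bb' * r)))) := by
          exact Finset.sum_congr rfl fun j _ => hlaw2 j
      _ = ENNReal.ofReal (∑ j ∈ s, ∫ r in Ioi (0:ℝ),
            rr * Real.exp (-(rr * r)) * bb d j (1 - Real.exp (-(bb' * r)))) := by
          rw [ENNReal.ofReal_sum_of_nonneg]
          intro j _
          refine setIntegral_nonneg measurableSet_Ioi fun r hrm => ?_
          obtain ⟨h0, h1⟩ := x_mem hb hrm
          have := bb_nonneg (d := d) (j := j) h0 h1
          have := (Real.exp_pos (-(rr * r))).le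
          positivity
      _ = ENNReal.ofReal (∫ r in Ioi (0:ℝ), ∑ j ∈ s,
            rr * Real.exp (-(rr * r)) * bb d j (1 - Real.exp (-(bb' * r)))) := by
          rw [integral_finset_sum _ fun j _ => integrable_term d hr hb j]
      _ = _ := by
          congr 1
          refine setIntegral_congr_fun measurableSet_Ioi fun r hrm => ?_
          rw [Finset.mul_sum]
  · intro i hi j hj hij
    simp only [Function.onFun, Set.disjoint_left]
    intro ω h1 h2
    exact hij (by simp only [Set.mem_setOf_eq] at h1 h2; rw [← h1, ← h2])

lemma int_term_nonneg (hr : 0 < rr) (hb : 0 < bb') (j : ℕ) :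
    0 ≤ ∫ r in Ioi (0:ℝ), rr * Real.exp (-(rr * r)) * bb d j (1 - Real.exp (-(bb' * r))) := by
  refine setIntegral_nonneg measurableSet_Ioi fun r hrm => ?_
  obtain ⟨h0, h1⟩ := x_mem hb hrm
  have := bb_nonneg (d := d) (j := j) h0 h1
  have := (Real.exp_pos (-(rr * r))).le
  positivity

lemma int_mean (hr : 0 < rr) (hb : 0 < bb') :
    ∫ r in Ioi (0:ℝ), rr * Real.exp (-(rr * r)) * ((d:ℝ) * (1 - Real.exp (-(bb' * r))))
      = bb' / (bb' + rr) * d := by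
  have hsplit : ∀ r : ℝ, rr * Real.exp (-(rr * r)) * ((d:ℝ) * (1 - Real.exp (-(bb' * r))))
      = ((d:ℝ) * rr) * Real.exp (-(rr * r)) - ((d:ℝ) * rr) * Real.exp (-((rr + bb') * r)) := by
    intro r
    have : Real.exp (-((rr + bb') * r)) = Real.exp (-(rr * r)) * Real.exp (-(bb' * r)) := by
      rw [← Real.exp_add]; ring_nf
    rw [this]; ring
  rw [setIntegral_congr_fun measurableSet_Ioi fun r _ => hsplit r]
  rw [integral_sub (((integrableOn_exp_rate rr hr).const_mul _))
      (((integrableOn_exp_rate (rr + bb') (by linarith)).const_mul _))]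
  rw [MeasureTheory.integral_const_mul, MeasureTheory.integral_const_mul, int_exp_Ioi rr hr,
    int_exp_Ioi (rr + bb') (by linarith)]
  field_simp
  ring

lemma expectation_Z (hr : 0 < rr) (hb : 0 < bb') (hZ : Measurable Z) (hle : ∀ ω, Z ω ≤ d)
    (hlaw' : ∀ j : ℕ, P {ω | Z ω = j} = ENNReal.ofReal
      (∫ r in Ioi (0:ℝ), rr * Real.exp (-(rr * r)) *
        ((d.choose j) * (1 - Real.exp (-(bb' * r))) ^ j * Real.exp (-(bb' * r)) ^ (d - j)))) :
    ∫ ω, (Z ω : ℝ) ∂P = bb' / (bb' + rr) * d := by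
  have hj : ∀ j : ℕ, P {ω | Z ω = j} = ENNReal.ofReal
      (∫ r in Ioi (0:ℝ), rr * Real.exp (-(rr * r)) * bb d j (1 - Real.exp (-(bb' * r)))) := by
    intro j
    have := law_event P Z d hr hb hZ hlaw' {j}
    simpa using this
  rw [integral_nat_cast_eq_sum P Z d hZ hle]
  calc ∑ j ∈ Finset.range (d+1), (j:ℝ) * (P {ω | Z ω = j}).toReal
      = ∑ j ∈ Finset.range (d+1), ∫ r in Ioi (0:ℝ),
          (j:ℝ) * (rr * Real.exp (-(rr * r)) * bb d j (1 - Real.exp (-(bb' * r)))) := by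
        refine Finset.sum_congr rfl fun j _ => ?_
        rw [hj j, ENNReal.toReal_ofReal (int_term_nonneg d hr hb j), ← MeasureTheory.integral_const_mul]
    _ = ∫ r in Ioi (0:ℝ), ∑ j ∈ Finset.range (d+1),
          (j:ℝ) * (rr * Real.exp (-(rr * r)) * bb d j (1 - Real.exp (-(bb' * r)))) := by
        rw [integral_finset_sum _ fun j _ => (integrable_term d hr hb j).const_mul _]
    _ = ∫ r in Ioi (0:ℝ), rr * Real.exp (-(rr * r)) *
          ((d:ℝ) * (1 - Real.exp (-(bb' * r)))) := by
        refine setIntegral_congr_fun measurableSet_Ioi fun r _ => ?_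
        rw [← bb_sum_mul d (1 - Real.exp (-(bb' * r))), Finset.mul_sum]
        exact Finset.sum_congr rfl fun j _ => by ring
    _ = bb' / (bb' + rr) * d := int_mean d hr hb

end Law2

section Tail
variable {Ω : Type} [MeasurableSpace Ω] (P : Measure Ω) [IsProbabilityMeasure P]
  (Z : Ω → ℕ) (d : ℕ) {rr bb' : ℝ}

-- pointwise bound on the binomial lower tail
lemma binom_tail_pointwise {δ x : ℝ} (hδ0 : 0 < δ) (hx0 : 0 ≤ x) (hx1 : x ≤ 1)
    (hd : 1 ≤ δ^2 * d) (hx : 8 * δ < x) :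
    ∑ j ∈ (Finset.range (d+1)).filter (fun j : ℕ => (j:ℝ) ≤ 4*δ*d), bb d j x
      ≤ 1 / (2 * δ * d) := by
  have hd1 : (1:ℝ) ≤ d := by nlinarith [sq_nonneg δ]
  have hdpos : (0:ℝ) < d := by linarith
  have hxpos : 0 < x := lt_trans (by positivity) hx
  have hdx : 0 < (d:ℝ) * x := by positivity
  have key : ∀ j ∈ (Finset.range (d+1)).filter (fun j : ℕ => (j:ℝ) ≤ 4*δ*d),
      bb d j x ≤ (2 / ((d:ℝ)*x))^2 * (((d:ℝ)*x - j)^2 * bb d j x) := by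
    intro j hj
    obtain ⟨hjr, hjle⟩ := Finset.mem_filter.mp hj
    have hbbn : 0 ≤ bb d j x := bb_nonneg hx0 hx1
    have ha : (d:ℝ)*x - j ≥ (d:ℝ)*x/2 := by nlinarith
    have ht : (1:ℝ) ≤ 2 / ((d:ℝ)*x) * ((d:ℝ)*x - j) := by
      rw [div_mul_eq_mul_div, le_div_iff₀ hdx]
      nlinarith
    calc bb d j x = 1 * bb d j x := (one_mul _).symm
      _ ≤ (2 / ((d:ℝ)*x) * ((d:ℝ)*x - j))^2 * bb d j x :=
          mul_le_mul_of_nonneg_right (one_le_pow₀ ht) hbbn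
      _ = (2 / ((d:ℝ)*x))^2 * (((d:ℝ)*x - j)^2 * bb d j x) := by ring
  calc ∑ j ∈ (Finset.range (d+1)).filter (fun j : ℕ => (j:ℝ) ≤ 4*δ*d), bb d j x
      ≤ ∑ j ∈ (Finset.range (d+1)).filter (fun j : ℕ => (j:ℝ) ≤ 4*δ*d),
          (2 / ((d:ℝ)*x))^2 * (((d:ℝ)*x - j)^2 * bb d j x) := Finset.sum_le_sum key
    _ ≤ ∑ j ∈ Finset.range (d+1), (2 / ((d:ℝ)*x))^2 * (((d:ℝ)*x - j)^2 * bb d j x) := by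
        refine Finset.sum_le_sum_of_subset_of_nonneg (Finset.filter_subset _ _) ?_
        intro j _ _
        have hbbn : 0 ≤ bb d j x := bb_nonneg hx0 hx1
        positivity
    _ = (2 / ((d:ℝ)*x))^2 * ((d:ℝ) * x * (1 - x)) := by
        rw [← Finset.mul_sum, bb_sum_var d x]
    _ ≤ 1 / (2 * δ * d) := by
        rw [div_pow, div_mul_eq_mul_div, div_le_div_iff₀ (by positivity) (by positivity)]
        have h1x : 1 - x ≤ 1 := by linarith
        have hA : (d:ℝ)*x*(1-x) ≤ (d:ℝ)*x := by nlinarith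
        have hB : 8*δ*((d:ℝ)*((d:ℝ)*x)) ≤ x*((d:ℝ)*((d:ℝ)*x)) :=
          mul_le_mul_of_nonneg_right hx.le (by positivity)
        nlinarith [mul_le_mul_of_nonneg_left hA (show (0:ℝ) ≤ 8*δ*d by positivity)]

end Tail

section Tail2
variable {Ω : Type} [MeasurableSpace Ω] (P : Measure Ω) [IsProbabilityMeasure P]
  (Z : Ω → ℕ) (d : ℕ) {rr bb' : ℝ}

lemma tail_bound (hr : 0 < rr) (hb : 0 < bb') (hZ : Measurable Z) (hle : ∀ ω, Z ω ≤ d)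
    (hlaw' : ∀ j : ℕ, P {ω | Z ω = j} = ENNReal.ofReal
      (∫ r in Ioi (0:ℝ), rr * Real.exp (-(rr * r)) *
        ((d.choose j) * (1 - Real.exp (-(bb' * r))) ^ j * Real.exp (-(bb' * r)) ^ (d - j))))
    {δ : ℝ} (hδ0 : 0 < δ) (hδ1 : δ ≤ 1/16) (hd : 1 ≤ δ^2 * d) :
    P {ω | (Z ω : ℝ) ≤ 4*δ*d} ≤ ENNReal.ofReal (rr/bb' * (16*δ) + δ/2) := by
  classical
  have hd1 : (1:ℝ) ≤ d := by nlinarith [sq_nonneg δ]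
  have hdpos : (0:ℝ) < d := by linarith
  set s : Finset ℕ := (Finset.range (d+1)).filter (fun j : ℕ => (j:ℝ) ≤ 4*δ*d) with hs
  have hset : {ω | (Z ω : ℝ) ≤ 4*δ*d} = {ω | Z ω ∈ s} := by
    ext ω
    simp only [Set.mem_setOf_eq, hs, Finset.mem_filter, Finset.mem_range, Nat.lt_succ_iff]
    exact ⟨fun h => ⟨hle ω, h⟩, fun h => h.2⟩
  rw [hset, law_event P Z d hr hb hZ hlaw' s]
  set r0 : ℝ := -Real.log (1 - 8*δ) / bb' with hr0def
  have h8δ : 8*δ ≤ 1/2 := by linarith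
  have h8δ0 : 0 < 1 - 8*δ := by linarith
  have hlog0 : Real.log (1 - 8*δ) ≤ 0 := Real.log_nonpos (by linarith) (by linarith)
  have hr00 : 0 ≤ r0 := by
    rw [hr0def]
    apply div_nonneg (by linarith) hb.le
  -- pointwise bound
  set f : ℝ → ℝ := fun r => rr * Real.exp (-(rr * r)) *
      ∑ j ∈ s, bb d j (1 - Real.exp (-(bb' * r))) with hf
  set g1 : ℝ → ℝ := (Ioc (0:ℝ) r0).indicator (fun r => rr * Real.exp (-(rr * r))) with hg1
  set g2 : ℝ → ℝ := fun r => (1/(2*δ*d)) * (rr * Real.exp (-(rr * r))) with hg2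
  have hfint : IntegrableOn f (Ioi (0:ℝ)) := by
    have : f = fun r => ∑ j ∈ s, rr * Real.exp (-(rr * r)) *
        bb d j (1 - Real.exp (-(bb' * r))) := by
      funext r; rw [hf]; simp [Finset.mul_sum]
    rw [this]
    exact integrable_finset_sum _ fun j _ => integrable_term d hr hb j
  have hg1int : IntegrableOn g1 (Ioi (0:ℝ)) :=
    ((integrableOn_exp_rate rr hr).const_mul rr).indicator measurableSet_Ioc
  have hg2int : IntegrableOn g2 (Ioi (0:ℝ)) :=
    ((integrableOn_exp_rate rr hr).const_mul rr).const_mul _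
  have hpt : ∀ r ∈ Ioi (0:ℝ), f r ≤ g1 r + g2 r := by
    intro r hrm
    have hrpos : (0:ℝ) < r := hrm
    obtain ⟨hx0, hx1⟩ := x_mem hb hrpos
    set x : ℝ := 1 - Real.exp (-(bb' * r)) with hxdef
    have hexp : 0 < Real.exp (-(rr * r)) := Real.exp_pos _
    have hg2pos : 0 ≤ g2 r := by rw [hg2]; positivity
    by_cases hx : x ≤ 8*δ
    · -- r ≤ r0, indicator active
      have hrr0 : r ∈ Ioc (0:ℝ) r0 := by
        constructor
        · exact hrpos
        · have hxe : 1 - 8*δ ≤ Real.exp (-(bb' * r)) := by rw [hxdef] at hx; linarith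
          have := Real.log_le_log h8δ0 hxe
          rw [Real.log_exp] at this
          rw [hr0def, le_div_iff₀ hb]
          linarith
      have hF1 : ∑ j ∈ s, bb d j x ≤ 1 := by
        rw [← bb_sum d x]
        refine Finset.sum_le_sum_of_subset_of_nonneg (Finset.filter_subset _ _) ?_
        exact fun j _ _ => bb_nonneg hx0 hx1
      have : f r ≤ rr * Real.exp (-(rr * r)) := by
        rw [hf]
        calc rr * Real.exp (-(rr * r)) * ∑ j ∈ s, bb d j x
            ≤ rr * Real.exp (-(rr * r)) * 1 := by
              exact mul_le_mul_of_nonneg_left hF1 (by positivity)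
          _ = rr * Real.exp (-(rr * r)) := mul_one _
      have hind : g1 r = rr * Real.exp (-(rr * r)) := Set.indicator_of_mem hrr0 _
      linarith
    · push_neg at hx
      have hF2 : ∑ j ∈ s, bb d j x ≤ 1/(2*δ*d) :=
        binom_tail_pointwise d hδ0 hx0 hx1 hd hx
      have hg1pos : 0 ≤ g1 r := by
        rw [hg1]
        exact Set.indicator_nonneg (fun y _ => by positivity) r
      have : f r ≤ g2 r := by
        rw [hf, hg2]
        calc rr * Real.exp (-(rr * r)) * ∑ j ∈ s, bb d j x
            ≤ rr * Real.exp (-(rr * r)) * (1/(2*δ*d)) :=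
              mul_le_mul_of_nonneg_left hF2 (by positivity)
          _ = (1/(2*δ*d)) * (rr * Real.exp (-(rr * r))) := by ring
      linarith
  have hint_le : ∫ r in Ioi (0:ℝ), f r ≤ ∫ r in Ioi (0:ℝ), (g1 r + g2 r) :=
    setIntegral_mono_on hfint (hg1int.add hg2int) measurableSet_Ioi hpt
  have hg1val : ∫ r in Ioi (0:ℝ), g1 r = 1 - Real.exp (-(rr * r0)) := by
    rw [hg1, integral_indicator measurableSet_Ioc, Measure.restrict_restrict measurableSet_Ioc]
    have : Ioc (0:ℝ) r0 ∩ Ioi 0 = Ioc 0 r0 := by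
      ext y; simp only [Set.mem_inter_iff, Set.mem_Ioc, Set.mem_Ioi]
      tauto
    rw [this, int_exp_Ioc rr r0 hr hr00]
  have hg2val : ∫ r in Ioi (0:ℝ), g2 r = 1/(2*δ*d) := by
    rw [hg2, MeasureTheory.integral_const_mul, MeasureTheory.integral_const_mul,
      int_exp_Ioi rr hr]
    field_simp
  -- numeric bounds
  have hlogb : -Real.log (1 - 8*δ) ≤ 16*δ := by
    have h1 : 1 + 16*δ ≤ Real.exp (16*δ) := by
      have := Real.add_one_le_exp (16*δ); linarith
    have h2 : Real.exp (-(16*δ)) ≤ 1 - 8*δ := by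
      rw [Real.exp_neg]
      have hp : (0:ℝ) < 1 + 16*δ := by linarith
      have : (Real.exp (16*δ))⁻¹ ≤ (1 + 16*δ)⁻¹ :=
        inv_anti₀ hp h1
      have h3 : (1 + 16*δ)⁻¹ ≤ 1 - 8*δ := by
        rw [inv_le_iff_one_le_mul₀ hp]  -- maybe wrong name
        nlinarith
      linarith
    have := (Real.le_log_iff_exp_le h8δ0).2 h2
    linarith
  have hbd1 : 1 - Real.exp (-(rr * r0)) ≤ rr/bb' * (16*δ) := by
    have h1 : 1 - Real.exp (-(rr * r0)) ≤ rr * r0 := by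
      have := Real.add_one_le_exp (-(rr * r0)); linarith
    have h2 : rr * r0 ≤ rr/bb' * (16*δ) := by
      rw [hr0def]
      rw [div_mul_eq_mul_div, mul_div_assoc]
      apply mul_le_mul_of_nonneg_left _ hr.le
      rw [div_le_div_iff₀ hb hb]  -- r0*bb' ≤ 16δ*bb'?
      nlinarith
    linarith
  have hbd2 : 1/(2*δ*d) ≤ δ/2 := by
    rw [div_le_div_iff₀ (by positivity) (by norm_num)]
    nlinarith
  apply ENNReal.ofReal_le_ofReal
  calc ∫ r in Ioi (0:ℝ), f r ≤ ∫ r in Ioi (0:ℝ), (g1 r + g2 r) := hint_le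
    _ = (∫ r in Ioi (0:ℝ), g1 r) + ∫ r in Ioi (0:ℝ), g2 r := integral_add hg1int hg2int
    _ = (1 - Real.exp (-(rr * r0))) + 1/(2*δ*d) := by rw [hg1val, hg2val]
    _ ≤ rr/bb' * (16*δ) + δ/2 := add_le_add hbd1 hbd2

end Tail2

section PerN
open ProbabilityTheory
variable {Ω : Type} [MeasurableSpace Ω]

lemma per_n_bound (P : Measure Ω) [IsProbabilityMeasure P]
    {ι : Type} [Fintype ι] (d : ι → ℕ) (Z : ι → Ω → ℕ)
    (πn c0 C δ : ℝ) (hπpos : 0 < πn) (hπle1 : πn ≤ 1) (hπc : c0 ≤ πn) (hc00 : 0 < c0)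
    (hC0 : 0 ≤ C) (hδ0 : 0 < δ) (hδc : δ < c0/4) (hδ16 : δ ≤ 1/16)
    (X : ℝ) (hX : X = ∑ i, (d i : ℝ)) (hXn : 16/(δ^3*c0^2) ≤ X)
    (hmr : ∀ i, Measurable (Z i))
    (hmem2 : ∀ i, MemLp (fun ω => (Z i ω : ℝ)) 2 P)
    (hESum : ∀ s : Finset ι, ∫ ω, (∑ i ∈ s, (Z i ω : ℝ)) ∂P = πn * ∑ i ∈ s, (d i : ℝ))
    (hVarSum : ∀ s : Finset ι, variance (fun ω => ∑ i ∈ s, (Z i ω : ℝ)) P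
      ≤ πn * ∑ i ∈ s, (d i : ℝ)^2)
    (hvert : ∀ i, 1 ≤ δ^2*(d i : ℝ) →
      P {ω | (Z i ω : ℝ) ≤ 4*δ*(d i : ℝ)} ≤ ENNReal.ofReal (16*C*δ + δ/2)) :
    P {ω | (∑ i, (Z i ω : ℝ)) ≤ δ * X} ≤ ENNReal.ofReal ((32*C+2)*δ) := by
  classical
  set K2 : ℝ := 32*C + 2 with hK2
  have hK21 : (1:ℝ) ≤ K2 := by rw [hK2]; linarith
  have hXpos : (0:ℝ) < X := lt_of_lt_of_le (by positivity) hXn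
  set T : Finset ι := Finset.univ.filter (fun i => (1:ℝ) ≤ δ^2 * (d i : ℝ)) with hT
  set XB : ℝ := ∑ i ∈ T, (d i : ℝ) with hXB
  set XS : ℝ := ∑ i ∈ Tᶜ, (d i : ℝ) with hXS
  have hsplit : XB + XS = X := by
    rw [hXB, hXS, hX]
    exact Finset.sum_add_sum_compl T _
  have hXBnn : 0 ≤ XB := Finset.sum_nonneg fun i _ => Nat.cast_nonneg _
  have hXSnn : 0 ≤ XS := Finset.sum_nonneg fun i _ => Nat.cast_nonneg _
  by_cases hcase : X/2 ≤ XS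
  · -- Chebyshev on the small-degree vertices
    set W : Ω → ℝ := fun ω => ∑ i ∈ Tᶜ, (Z i ω : ℝ) with hW
    have hEW : ∫ ω, W ω ∂P = πn * XS := hESum Tᶜ
    have hsq : ∑ i ∈ Tᶜ, (d i : ℝ)^2 ≤ (1/δ^2) * XS := by
      rw [hXS, Finset.mul_sum]
      refine Finset.sum_le_sum fun i hi => ?_
      have hni : ¬ ((1:ℝ) ≤ δ^2 * (d i : ℝ)) := by
        have := Finset.mem_compl.1 hi
        simpa [hT] using this
      push_neg at hni
      have hd0 : (0:ℝ) ≤ (d i : ℝ) := Nat.cast_nonneg _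
      rw [div_mul_eq_mul_div, one_mul, le_div_iff₀ (by positivity)]
      nlinarith
    have hVarW : variance W P ≤ (1/δ^2) * X := by
      have hXSX : XS ≤ X := by linarith
      calc variance W P ≤ πn * ∑ i ∈ Tᶜ, (d i : ℝ)^2 := hVarSum Tᶜ
        _ ≤ πn * ((1/δ^2) * XS) := mul_le_mul_of_nonneg_left hsq hπpos.le
        _ ≤ 1 * ((1/δ^2) * X) :=
            mul_le_mul hπle1 (mul_le_mul_of_nonneg_left hXSX (by positivity))
              (by positivity) zero_le_one
        _ = (1/δ^2) * X := one_mul _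
    have hmemW : MemLp W 2 P := by
      have heq : W = ∑ i ∈ Tᶜ, (fun ω => (Z i ω : ℝ)) := by
        funext ω; simp [hW]
      rw [heq]
      exact memLp_finsetSum' _ fun i _ => hmem2 i
    have hsub : {ω | (∑ i, (Z i ω : ℝ)) ≤ δ * X}
        ⊆ {ω | c0 * X/4 ≤ |W ω - ∫ ω', W ω' ∂P|} := by
      intro ω hω
      simp only [Set.mem_setOf_eq] at hω ⊢
      have hWS : W ω ≤ ∑ i, (Z i ω : ℝ) :=
        Finset.sum_le_sum_of_subset_of_nonneg (Finset.subset_univ _)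
          (fun i _ _ => Nat.cast_nonneg _)
      have h1 : W ω ≤ δ * X := le_trans hWS hω
      rw [hEW]
      have hEWge : c0 * X/2 ≤ πn * XS := by
        calc c0 * X/2 = c0 * (X/2) := by ring
          _ ≤ πn * XS := mul_le_mul hπc hcase (by positivity) hπpos.le
      have h1b : W ω ≤ c0/4 * X :=
        le_trans h1 (mul_le_mul_of_nonneg_right hδc.le hXpos.le)
      have h2 : c0 * X/4 ≤ πn * XS - W ω := by linarith
      calc c0 * X/4 ≤ πn * XS - W ω := h2
        _ ≤ |W ω - πn * XS| := by rw [abs_sub_comm]; exact le_abs_self _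
    calc P {ω | (∑ i, (Z i ω : ℝ)) ≤ δ * X}
        ≤ P {ω | c0 * X/4 ≤ |W ω - ∫ ω', W ω' ∂P|} := measure_mono hsub
      _ ≤ ENNReal.ofReal (variance W P / (c0 * X/4)^2) :=
          meas_ge_le_variance_div_sq hmemW (by positivity)
      _ ≤ ENNReal.ofReal (K2 * δ) := by
          apply ENNReal.ofReal_le_ofReal
          rw [div_le_iff₀ (by positivity)]
          have hVar3 : variance W P * δ^2 ≤ X := by
            calc variance W P * δ^2 ≤ ((1/δ^2) * X) * δ^2 :=
                  mul_le_mul_of_nonneg_right hVarW (sq_nonneg δ)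
              _ = X := by field_simp
          have h4 : (16:ℝ) ≤ δ^3*c0^2*X := by
            have := (div_le_iff₀ (show (0:ℝ) < δ^3*c0^2 by positivity)).1 hXn
            linarith
          have h7 : X ≤ (K2 * δ * (c0 * X/4)^2) * δ^2 := by
            have h8 := mul_le_mul_of_nonneg_right h4
              (show (0:ℝ) ≤ X/16 by positivity)
            have h9 := mul_le_mul_of_nonneg_right hK21
              (show (0:ℝ) ≤ δ^3*c0^2*X^2/16 by positivity)
            nlinarith
          have h10 : variance W P * δ^2 ≤ (K2 * δ * (c0 * X/4)^2) * δ^2 :=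
            le_trans hVar3 h7
          exact le_of_mul_le_mul_right h10 (by positivity)
  · -- Markov on the large-degree vertices
    push_neg at hcase
    have hXBge : X/2 < XB := by linarith
    have hXBpos : 0 < XB := lt_of_le_of_lt (by positivity) hXBge
    set η : ℝ := 16*C*δ + δ/2 with hη
    have hηnn : 0 ≤ η := by
      rw [hη]
      have : (0:ℝ) ≤ 16*C*δ := by positivity
      linarith
    have hAi : ∀ i, MeasurableSet {ω | (Z i ω : ℝ) ≤ 4*δ*(d i : ℝ)} :=
      fun i => measurableSet_le (measurable_from_top.comp (hmr i)) measurable_const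
    set G : Ω → ℝ := fun ω => ∑ i ∈ T, (d i : ℝ) *
        Set.indicator {ω' | (Z i ω' : ℝ) ≤ 4*δ*(d i : ℝ)} (fun _ => (1:ℝ)) ω with hG
    have hGint : Integrable G P := by
      have heq : G = ∑ i ∈ T, (fun ω => (d i : ℝ) *
          Set.indicator {ω' | (Z i ω' : ℝ) ≤ 4*δ*(d i : ℝ)} (fun _ => (1:ℝ)) ω) := by
        funext ω; simp [hG]
      rw [heq]
      exact integrable_finset_sum' _ fun i _ =>
        ((((integrable_const (1:ℝ) : Integrable _ P)).indicator (hAi i)).const_mul _)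
    have hGnn : 0 ≤ᵐ[P] G := by
      refine ae_of_all _ fun ω => ?_
      rw [hG]
      refine Finset.sum_nonneg fun i _ => mul_nonneg (Nat.cast_nonneg _) ?_
      exact Set.indicator_nonneg (fun _ _ => zero_le_one) ω
    have hEG : ∫ ω, G ω ∂P ≤ η * XB := by
      have heq : ∫ ω, G ω ∂P = ∑ i ∈ T, (d i : ℝ) *
          (P {ω' | (Z i ω' : ℝ) ≤ 4*δ*(d i : ℝ)}).toReal := by
        rw [hG, integral_finset_sum _ fun i _ =>
          ((((integrable_const (1:ℝ) : Integrable _ P)).indicator (hAi i)).const_mul _)]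
        refine Finset.sum_congr rfl fun i _ => ?_
        rw [MeasureTheory.integral_const_mul, integral_indicator_const _ (hAi i)]
        simp [mul_comm, Measure.real]
      rw [heq, hXB, Finset.mul_sum]
      refine Finset.sum_le_sum fun i hi => ?_
      rw [mul_comm η _]
      refine mul_le_mul_of_nonneg_left ?_ (Nat.cast_nonneg _)
      have hibig : (1:ℝ) ≤ δ^2 * (d i : ℝ) := by
        have := (Finset.mem_filter.1 (hT ▸ hi)).2
        simpa using this
      exact ENNReal.toReal_le_of_le_ofReal hηnn (hvert i hibig)
    have hsub2 : {ω | (∑ i, (Z i ω : ℝ)) ≤ δ * X} ⊆ {ω | XB/2 ≤ G ω} := by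
      intro ω hω
      simp only [Set.mem_setOf_eq] at hω ⊢
      by_contra hcon
      push_neg at hcon
      have hGeq : G ω = ∑ i ∈ T.filter
          (fun i => (Z i ω : ℝ) ≤ 4*δ*(d i : ℝ)), (d i : ℝ) := by
        rw [hG, Finset.sum_filter]
        refine Finset.sum_congr rfl fun i _ => ?_
        by_cases h : (Z i ω : ℝ) ≤ 4*δ*(d i : ℝ)
        · simp [h]
        · simp [h]
      have hparts := Finset.sum_filter_add_sum_filter_not T
        (fun i => (Z i ω : ℝ) ≤ 4*δ*(d i : ℝ)) (fun i => (d i : ℝ))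
      have hbig2 : XB/2 < ∑ i ∈ T.filter
          (fun i => ¬((Z i ω : ℝ) ≤ 4*δ*(d i : ℝ))), (d i : ℝ) := by
        rw [hGeq] at hcon
        rw [← hXB] at hparts
        linarith
      have hlow : ∑ i ∈ T.filter
          (fun i => ¬((Z i ω : ℝ) ≤ 4*δ*(d i : ℝ))), (Z i ω : ℝ)
          ≤ ∑ i, (Z i ω : ℝ) :=
        Finset.sum_le_sum_of_subset_of_nonneg (Finset.subset_univ _)
          (fun i _ _ => Nat.cast_nonneg _)
      have hlow2 : ∑ i ∈ T.filter
          (fun i => ¬((Z i ω : ℝ) ≤ 4*δ*(d i : ℝ))), 4*δ*(d i : ℝ)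
          ≤ ∑ i ∈ T.filter
          (fun i => ¬((Z i ω : ℝ) ≤ 4*δ*(d i : ℝ))), (Z i ω : ℝ) := by
        refine Finset.sum_le_sum fun i hi => ?_
        have := (Finset.mem_filter.1 hi).2
        push_neg at this
        exact this.le
      rw [← Finset.mul_sum] at hlow2
      have hs1 := mul_lt_mul_of_pos_left hbig2 (show (0:ℝ) < 4*δ by positivity)
      have hs2 := mul_lt_mul_of_pos_left hXBge (show (0:ℝ) < 2*δ by positivity)
      linarith
    have hmark := mul_meas_ge_le_integral_of_nonneg hGnn hGint (XB/2)
    have hPle : (P {ω | XB/2 ≤ G ω}).toReal ≤ 2*η := by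
      have h1 : (XB/2) * (P {ω | XB/2 ≤ G ω}).toReal ≤ η * XB :=
        le_trans hmark hEG
      have h2 : (0:ℝ) ≤ (P {ω | XB/2 ≤ G ω}).toReal := ENNReal.toReal_nonneg
      nlinarith
    calc P {ω | (∑ i, (Z i ω : ℝ)) ≤ δ * X}
        ≤ P {ω | XB/2 ≤ G ω} := measure_mono hsub2
      _ = ENNReal.ofReal ((P {ω | XB/2 ≤ G ω}).toReal) :=
          (ENNReal.ofReal_toReal (measure_ne_top _ _)).symm
      _ ≤ ENNReal.ofReal (2*η) := ENNReal.ofReal_le_ofReal hPle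
      _ ≤ ENNReal.ofReal (K2 * δ) := by
          apply ENNReal.ofReal_le_ofReal
          rw [hη, hK2]
          linarith

end PerN
open ProbabilityTheory in
/-- Lemma 4.1: with `Z_{0,i}` the number of red half-edges at the initially
infective vertex `i` (i.e. a mixed binomial `Bin(d_i^I, 1 − e^{−β_n R_i})`
with `R_i ~ Exp(ρ_n)` independent), `Z_0 = Σ_i Z_{0,i}` and
`π_n = β_n/(β_n+ρ_n)`:
(i) if `d_{I,max} = o(X_{I,0})` then `Z_0 = π_n X_{I,0}(1 + o_p(1))`;
(ii) in general, `lim_{δ→0} limsup_n P(Z_0 ≤ δ X_{I,0}) = 0`. -/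
theorem red_halfedges_initial_count
    -- rates, with ρ_n/β_n = O(1)
    (ρ β : ℕ → ℝ) (hρ : ∀ n, 0 ≤ ρ n) (hβ : ∀ n, 0 < β n)
    (hratio : (fun n => ρ n / β n) =O[atTop] fun _ => (1 : ℝ))
    (π : ℕ → ℝ) (hπ : ∀ n, π n = β n / (β n + ρ n))
    -- the initially infective vertices and their degrees
    (nI : ℕ → ℕ) (dI : ∀ n, Fin (nI n) → ℕ)
    -- X_{I,0} = Σ_i d_i^I → ∞
    (XI0 : ℕ → ℕ) (hXI0 : ∀ n, XI0 n = ∑ i, dI n i)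
    (hXI0top : Tendsto (fun n => XI0 n) atTop atTop)
    -- d_{I,max}
    (dImax : ℕ → ℕ) (hdImax : ∀ n, dImax n = Finset.univ.sup (dI n))
    -- the probability spaces and the random variables Z_{0,i}
    (Ω : ℕ → Type) [∀ n, MeasurableSpace (Ω n)]
    (P : ∀ n, Measure (Ω n)) (hP : ∀ n, IsProbabilityMeasure (P n))
    (Z0i : ∀ n, Fin (nI n) → Ω n → ℕ)
    (hmeas : ∀ n i, Measurable (Z0i n i))
    (hle : ∀ n i ω, Z0i n i ω ≤ dI n i)
    -- Z_{0,i} has the mixed binomial distribution Bin(d_i^I, 1 − e^{−β_n R}),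
    -- R ~ Exp(ρ_n); if ρ_n = 0 then all half-edges are red
    (hlaw : ∀ n (i : Fin (nI n)) (j : ℕ),
      (ρ n ≠ 0 → P n {ω | Z0i n i ω = j} = ENNReal.ofReal
        (∫ r in Set.Ioi (0 : ℝ), ρ n * Real.exp (-(ρ n * r)) *
          ((dI n i).choose j * (1 - Real.exp (-(β n * r))) ^ j *
            Real.exp (-(β n * r)) ^ (dI n i - j)))) ∧
      (ρ n = 0 → P n {ω | Z0i n i ω = dI n i} = 1))
    -- the Z_{0,i}, i = 1,…,n_I, are independent
    (hindep : ∀ n, ProbabilityTheory.iIndepFun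
      (Z0i n) (P n)) :
    -- (i)
    (((fun n => (dImax n : ℝ)) =o[atTop] fun n => (XI0 n : ℝ)) →
      ∀ ε : ℝ, 0 < ε →
        Tendsto (fun n => P n {ω |
            ε ≤ |(∑ i, (Z0i n i ω : ℝ)) / (π n * (XI0 n : ℝ)) - 1|})
          atTop (𝓝 0)) ∧
    -- (ii)
    Tendsto (fun δ : ℝ =>
        Filter.limsup (fun n => P n {ω | (∑ i, (Z0i n i ω : ℝ)) ≤ δ * (XI0 n : ℝ)}) atTop)
      (𝓝[>] (0 : ℝ)) (𝓝 (0 : ℝ≥0∞)) := by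
  classical
  have hβρ : ∀ n, 0 < β n + ρ n := fun n => by have := hβ n; have := hρ n; linarith
  have hπpos : ∀ n, 0 < π n := fun n => by rw [hπ n]; exact div_pos (hβ n) (hβρ n)
  have hπle1 : ∀ n, π n ≤ 1 := fun n => by
    rw [hπ n, div_le_one (hβρ n)]; linarith [hρ n]
  obtain ⟨C, hC0, hCbig⟩ := hratio.exists_nonneg
  have hCev : ∀ᶠ n in atTop, ρ n / β n ≤ C := by
    filter_upwards [hCbig.bound] with n hn
    have h1 : ρ n / β n ≤ |ρ n / β n| := le_abs_self _
    simpa [Real.norm_eq_abs] using h1.trans hn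
  set c0 : ℝ := 1/(1+C) with hc0def
  have hc00 : 0 < c0 := by rw [hc0def]; positivity
  have hc01 : c0 ≤ 1 := by
    rw [hc0def, div_le_one (by linarith)]; linarith
  have hπge : ∀ n, ρ n / β n ≤ C → c0 ≤ π n := by
    intro n h
    have hρC : ρ n ≤ C * β n := (div_le_iff₀ (hβ n)).1 h
    rw [hπ n, hc0def, div_le_div_iff₀ (by linarith) (hβρ n)]
    nlinarith [hβ n]
  have hmr : ∀ n i, Measurable (fun ω => (Z0i n i ω : ℝ)) :=
    fun n i => measurable_from_top.comp (hmeas n i)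
  have hmem2 : ∀ n i, MemLp (fun ω => (Z0i n i ω : ℝ)) 2 (P n) := by
    intro n i
    haveI := hP n
    refine MemLp.mono_exponent ?_ le_top
    refine memLp_top_of_bound (hmr n i).aestronglyMeasurable (dI n i) (ae_of_all _ fun ω => ?_)
    rw [Real.norm_eq_abs, abs_of_nonneg (Nat.cast_nonneg _)]
    exact_mod_cast hle n i ω
  -- expectation of each Z0i
  have hEi : ∀ n i, ∫ ω, (Z0i n i ω : ℝ) ∂(P n) = π n * dI n i := by
    intro n i
    haveI := hP n
    rcases eq_or_ne (ρ n) 0 with h0 | h0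
    · have h1 := (hlaw n i (dI n i)).2 h0
      have hae : ∀ᵐ ω ∂(P n), Z0i n i ω = dI n i := by
        have := (prob_compl_eq_zero_iff ((hmeas n i) (measurableSet_singleton (dI n i)))).2 h1
        rw [ae_iff]
        exact this
      calc ∫ ω, (Z0i n i ω : ℝ) ∂(P n) = ∫ _ω, ((dI n i : ℝ)) ∂(P n) :=
            integral_congr_ae (hae.mono fun ω h => by simp [h])
        _ = (dI n i : ℝ) := by rw [integral_const]; simp
        _ = π n * dI n i := by rw [hπ n, h0, add_zero, div_self (hβ n).ne', one_mul]
    · have hr : 0 < ρ n := lt_of_le_of_ne (hρ n) (Ne.symm h0)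
      have := expectation_Z (P n) (Z0i n i) (dI n i) hr (hβ n) (hmeas n i) (hle n i)
        (fun j => (hlaw n i j).1 h0)
      rw [this, hπ n]
  -- variance of each Z0i
  have hVari : ∀ n i, variance (fun ω => (Z0i n i ω : ℝ)) (P n) ≤ π n * (dI n i : ℝ)^2 := by
    intro n i
    haveI := hP n
    calc variance (fun ω => (Z0i n i ω : ℝ)) (P n)
        ≤ ∫ ω, ((fun ω => (Z0i n i ω : ℝ))^2) ω ∂(P n) :=
          ProbabilityTheory.variance_le_expectation_sq (hmr n i).aestronglyMeasurable
      _ ≤ ∫ ω, (dI n i : ℝ) * (Z0i n i ω : ℝ) ∂(P n) := by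
          refine integral_mono ((hmem2 n i).integrable_sq) (((hmem2 n i).integrable
            one_le_two).const_mul _) fun ω => ?_
          have h1 : (Z0i n i ω : ℝ) ≤ dI n i := by exact_mod_cast hle n i ω
          have h2 : (0:ℝ) ≤ (Z0i n i ω : ℝ) := Nat.cast_nonneg _
          simp only [Pi.pow_apply]
          nlinarith
      _ = π n * (dI n i : ℝ)^2 := by
          rw [MeasureTheory.integral_const_mul, hEi n i]; ring
  -- pairwise independence of real casts
  have hind2 : ∀ n (i j : Fin (nI n)), i ≠ j → ProbabilityTheory.IndepFun
      (fun ω => (Z0i n i ω : ℝ)) (fun ω => (Z0i n j ω : ℝ)) (P n) :=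
    fun n i j hij => ProbabilityTheory.IndepFun.comp ((hindep n).indepFun hij)
      measurable_from_top measurable_from_top
  -- variance of partial sums
  have hVarSum : ∀ n (s : Finset (Fin (nI n))),
      variance (fun ω => ∑ i ∈ s, (Z0i n i ω : ℝ)) (P n)
        ≤ π n * ∑ i ∈ s, (dI n i : ℝ)^2 := by
    intro n s
    haveI := hP n
    have heq : (fun ω => ∑ i ∈ s, (Z0i n i ω : ℝ))
        = ∑ i ∈ s, (fun ω => (Z0i n i ω : ℝ)) := by
      funext ω; simp
    rw [heq, ProbabilityTheory.IndepFun.variance_sum (fun i _ => hmem2 n i)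
      (fun i _ j _ hij => hind2 n i j hij)]
    rw [Finset.mul_sum]
    exact Finset.sum_le_sum fun i _ => hVari n i
  -- expectation of partial sums
  have hESum : ∀ n (s : Finset (Fin (nI n))),
      ∫ ω, (∑ i ∈ s, (Z0i n i ω : ℝ)) ∂(P n) = π n * ∑ i ∈ s, (dI n i : ℝ) := by
    intro n s
    haveI := hP n
    rw [integral_finset_sum s fun i _ => (hmem2 n i).integrable one_le_two]
    rw [Finset.mul_sum]
    exact Finset.sum_congr rfl fun i _ => hEi n i
  constructor
  · -- part (i)
    intro ho ε hε
    have hXev : ∀ᶠ n in atTop, (1:ℝ) ≤ (XI0 n : ℝ) := by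
      filter_upwards [hXI0top.eventually_ge_atTop 1] with n hn
      exact_mod_cast hn
    have hb : ∀ᶠ n in atTop, P n {ω |
        ε ≤ |(∑ i, (Z0i n i ω : ℝ)) / (π n * (XI0 n : ℝ)) - 1|}
        ≤ ENNReal.ofReal ((dImax n : ℝ) / (ε^2 * c0 * (XI0 n : ℝ))) := by
      filter_upwards [hXev, hCev] with n hX1 hCn
      haveI := hP n
      have hXpos : (0:ℝ) < (XI0 n : ℝ) := by linarith
      have hπX : 0 < π n * (XI0 n : ℝ) := mul_pos (hπpos n) hXpos
      have hπc : c0 ≤ π n := hπge n hCn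
      have hES : ∫ ω, (∑ i, (Z0i n i ω : ℝ)) ∂(P n) = π n * (XI0 n : ℝ) := by
        rw [hESum n Finset.univ]
        congr 1
        rw [hXI0 n]
        push_cast
        rfl
      have hmemS : MemLp (fun ω => ∑ i, (Z0i n i ω : ℝ)) 2 (P n) := by
        have heq : (fun ω => ∑ i, (Z0i n i ω : ℝ))
            = ∑ i : Fin (nI n), (fun ω => (Z0i n i ω : ℝ)) := by
          funext ω; simp
        rw [heq]
        exact memLp_finsetSum' _ fun i _ => hmem2 n i
      have hevent : {ω | ε ≤ |(∑ i, (Z0i n i ω : ℝ)) / (π n * (XI0 n : ℝ)) - 1|}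
          = {ω | ε * (π n * (XI0 n : ℝ)) ≤
              |(∑ i, (Z0i n i ω : ℝ)) - ∫ ω', (∑ i, (Z0i n i ω' : ℝ)) ∂(P n)|} := by
        ext ω
        simp only [Set.mem_setOf_eq]
        rw [hES, div_sub_one hπX.ne', abs_div, abs_of_pos hπX, le_div_iff₀ hπX]
      have hcheb := ProbabilityTheory.meas_ge_le_variance_div_sq (μ := P n) hmemS
        (mul_pos hε hπX)
      have hVarS : variance (fun ω => ∑ i, (Z0i n i ω : ℝ)) (P n)
          ≤ π n * ((dImax n : ℝ) * (XI0 n : ℝ)) := by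
        refine le_trans (hVarSum n Finset.univ) ?_
        apply mul_le_mul_of_nonneg_left _ (hπpos n).le
        have h2 : ∀ i : Fin (nI n), (dI n i : ℝ) ≤ (dImax n : ℝ) := by
          intro i
          have : dI n i ≤ dImax n := by
            rw [hdImax n]; exact Finset.le_sup (Finset.mem_univ i)
          exact_mod_cast this
        calc ∑ i : Fin (nI n), (dI n i : ℝ)^2
            ≤ ∑ i : Fin (nI n), (dImax n : ℝ) * (dI n i : ℝ) := by
              refine Finset.sum_le_sum fun i _ => ?_
              have := h2 i
              have h3 : (0:ℝ) ≤ (dI n i : ℝ) := Nat.cast_nonneg _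
              nlinarith
          _ = (dImax n : ℝ) * (XI0 n : ℝ) := by
              rw [← Finset.mul_sum, hXI0 n]
              push_cast
              rfl
      calc P n {ω | ε ≤ |(∑ i, (Z0i n i ω : ℝ)) / (π n * (XI0 n : ℝ)) - 1|}
          = P n {ω | ε * (π n * (XI0 n : ℝ)) ≤
              |(∑ i, (Z0i n i ω : ℝ)) - ∫ ω', (∑ i, (Z0i n i ω' : ℝ)) ∂(P n)|} := by
            rw [hevent]
        _ ≤ ENNReal.ofReal (variance (fun ω => ∑ i, (Z0i n i ω : ℝ)) (P n)
              / (ε * (π n * (XI0 n : ℝ)))^2) := hcheb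
        _ ≤ ENNReal.ofReal ((dImax n : ℝ) / (ε^2 * c0 * (XI0 n : ℝ))) := by
            apply ENNReal.ofReal_le_ofReal
            rw [div_le_div_iff₀ (by positivity) (by positivity)]
            have hVnn : 0 ≤ variance (fun ω => ∑ i, (Z0i n i ω : ℝ)) (P n) :=
              ProbabilityTheory.variance_nonneg _ _
            have hda : (0:ℝ) ≤ (dImax n : ℝ) := Nat.cast_nonneg _
            nlinarith [mul_le_mul_of_nonneg_right hVarS
                (show (0:ℝ) ≤ ε^2 * c0 * (XI0 n : ℝ) by positivity),
              mul_le_mul_of_nonneg_right hπc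
                (mul_nonneg (mul_nonneg (mul_nonneg hda (sq_nonneg ε)) (hπpos n).le)
                  (sq_nonneg ((XI0 n : ℝ))))]
    have htop : Tendsto (fun n => ENNReal.ofReal ((dImax n : ℝ) / (ε^2 * c0 * (XI0 n : ℝ))))
        atTop (𝓝 0) := by
      have hreal : Tendsto (fun n => (dImax n : ℝ) / (ε^2 * c0 * (XI0 n : ℝ))) atTop (𝓝 0) := by
        have h := ho.tendsto_div_nhds_zero
        have heq : (fun n => (dImax n : ℝ) / (ε^2 * c0 * (XI0 n : ℝ)))
            = fun n => (1/(ε^2*c0)) * ((dImax n : ℝ) / (XI0 n : ℝ)) := by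
          funext n
          rw [div_mul_div_comm, one_mul]
        rw [heq]
        have h2 := h.const_mul (1/(ε^2*c0))
        simpa only [mul_zero] using h2
      have := ENNReal.tendsto_ofReal hreal
      simpa using this
    exact tendsto_of_tendsto_of_tendsto_of_le_of_le' tendsto_const_nhds htop
      (Eventually.of_forall fun n => zero_le) hb
  · -- part (ii)
    set K2 : ℝ := 32*C + 2 with hK2
    set δ1 : ℝ := min (c0/4) (1/16) with hδ1
    have hδ1pos : 0 < δ1 := lt_min (by linarith) (by norm_num)
    have key : ∀ δ : ℝ, 0 < δ → δ < δ1 →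
        Filter.limsup (fun n => P n {ω | (∑ i, (Z0i n i ω : ℝ)) ≤ δ * (XI0 n : ℝ)}) atTop
          ≤ ENNReal.ofReal (K2 * δ) := by
      intro δ hδ0 hδlt
      have hδc : δ < c0/4 := lt_of_lt_of_le hδlt (min_le_left _ _)
      have hδ16 : δ ≤ 1/16 := le_of_lt (lt_of_lt_of_le hδlt (min_le_right _ _))
      refine Filter.limsup_le_of_le (by isBoundedDefault) ?_
      have hXbig : ∀ᶠ n in atTop, (16:ℝ)/(δ^3*c0^2) ≤ (XI0 n : ℝ) := by
        filter_upwards [hXI0top.eventually_ge_atTop (⌈(16:ℝ)/(δ^3*c0^2)⌉₊)] with n hn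
        calc (16:ℝ)/(δ^3*c0^2) ≤ (⌈(16:ℝ)/(δ^3*c0^2)⌉₊ : ℝ) := Nat.le_ceil _
          _ ≤ (XI0 n : ℝ) := by exact_mod_cast hn
      filter_upwards [hXbig, hCev] with n hXn hCn
      haveI := hP n
      have hconc : P n {ω | (∑ i, (Z0i n i ω : ℝ)) ≤ δ * (XI0 n : ℝ)}
          ≤ ENNReal.ofReal ((32*C+2)*δ) := by
        refine per_n_bound (P n) (dI n) (Z0i n) (π n) c0 C δ (hπpos n) (hπle1 n)
          (hπge n hCn) hc00 hC0 hδ0 hδc hδ16 ((XI0 n : ℝ)) ?_ hXn (hmeas n)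
          (fun i => hmem2 n i) (hESum n) (hVarSum n) ?_
        · rw [hXI0 n]; push_cast; rfl
        · intro i hdbig
          rcases eq_or_ne (ρ n) 0 with h0 | h0
          · have h1 := (hlaw n i (dI n i)).2 h0
            have hd1 : (1:ℝ) ≤ (dI n i : ℝ) := by
              nlinarith [Nat.cast_nonneg (α := ℝ) (dI n i)]
            have hsub0 : {ω | (Z0i n i ω : ℝ) ≤ 4*δ*(dI n i : ℝ)}
                ⊆ {ω | Z0i n i ω = dI n i}ᶜ := by
              intro ω hω hc
              simp only [Set.mem_setOf_eq] at hω hc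
              have hcast : (Z0i n i ω : ℝ) = (dI n i : ℝ) := by exact_mod_cast hc
              nlinarith
            calc P n {ω | (Z0i n i ω : ℝ) ≤ 4*δ*(dI n i : ℝ)}
                ≤ P n ({ω | Z0i n i ω = dI n i}ᶜ) := measure_mono hsub0
              _ = 0 := (prob_compl_eq_zero_iff
                  ((hmeas n i) (measurableSet_singleton (dI n i)))).2 h1
              _ ≤ ENNReal.ofReal (16*C*δ + δ/2) := zero_le
          · have hr : 0 < ρ n := lt_of_le_of_ne (hρ n) (Ne.symm h0)
            refine le_trans (tail_bound (P n) (Z0i n i) (dI n i) hr (hβ n)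
              (hmeas n i) (hle n i) (fun j => (hlaw n i j).1 h0) hδ0 hδ16 hdbig)
              (ENNReal.ofReal_le_ofReal ?_)
            have h5 : ρ n / β n * (16*δ) ≤ C * (16*δ) :=
              mul_le_mul_of_nonneg_right hCn (by positivity)
            linarith
      calc P n {ω | (∑ i, (Z0i n i ω : ℝ)) ≤ δ * (XI0 n : ℝ)}
          ≤ ENNReal.ofReal ((32*C+2)*δ) := hconc
        _ = ENNReal.ofReal (K2 * δ) := by rw [hK2]
    have hub : ∀ᶠ δ in 𝓝[>] (0:ℝ),
        Filter.limsup (fun n => P n {ω | (∑ i, (Z0i n i ω : ℝ)) ≤ δ * (XI0 n : ℝ)}) atTop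
          ≤ ENNReal.ofReal (K2 * δ) := by
      filter_upwards [Ioo_mem_nhdsGT hδ1pos] with δ hδ
      exact key δ hδ.1 hδ.2
    have htop : Tendsto (fun δ : ℝ => ENNReal.ofReal (K2 * δ)) (𝓝[>] (0:ℝ)) (𝓝 0) := by
      have h1 : Tendsto (fun δ : ℝ => K2 * δ) (𝓝[>] (0:ℝ)) (𝓝 0) := by
        have h2 : Tendsto (fun δ : ℝ => K2 * δ) (𝓝 (0:ℝ)) (𝓝 (K2 * 0)) :=
          (continuous_const.mul continuous_id).tendsto 0
        rw [mul_zero] at h2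
        exact h2.mono_left nhdsWithin_le_nhds
      have := ENNReal.tendsto_ofReal h1
      simpa using this
    exact tendsto_of_tendsto_of_tendsto_of_le_of_le' tendsto_const_nhds htop
      (Eventually.of_forall fun _ => zero_le) hub
end
end

section
/- Let (W_m)_{m=0}^∞ be a real-valued process adapted to a filtration (F_m)_{m=0}^∞ with W_0 = 0, and let τ ≤ ∞ be a stopping time with respect to (F_m). Suppose v, w > 0 are such that for every m ≥ 0: E[W_{m+1} − W_m | F_m] ≥ v almost surely on the event {m < τ}, and E[(W_{m+1} − W_m)²] ≤ w. Then for any b > 0, P(inf_{0 ≤ m ≤ τ} W_m ≤ −b) ≤ 8w/(bv). -/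
open MeasureTheory Filter Topology Asymptotics
open scoped ENNReal NNReal

noncomputable section

namespace RWAux

variable {Ω : Type*} {m m0 : MeasurableSpace Ω} {μ : Measure Ω}

/-- product of two L² functions is integrable -/
lemma integrable_mul_of_memL2 {f g : Ω → ℝ} (hf : MemLp f 2 μ) (hg : MemLp g 2 μ) :
    Integrable (fun ω => f ω * g ω) μ := by
  have hb : Integrable (fun ω => (f ω ^ 2 + g ω ^ 2) / 2) μ :=
    ((hf.integrable_sq.add hg.integrable_sq).div_const 2)
  refine hb.mono' (hf.aestronglyMeasurable.mul hg.aestronglyMeasurable) ?_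
  filter_upwards with ω
  have h : |f ω| * |g ω| ≤ (f ω ^ 2 + g ω ^ 2) / 2 := by
    nlinarith [sq_nonneg (|f ω| - |g ω|), sq_abs (f ω), sq_abs (g ω), abs_nonneg (f ω),
      abs_nonneg (g ω)]
  simpa [Real.norm_eq_abs, abs_of_nonneg (by positivity : (0:ℝ) ≤ (f ω ^ 2 + g ω ^ 2) / 2), abs_mul] using h

/-- conditional expectation of an L² function is L² -/
lemma memL2_condexp [IsFiniteMeasure μ] (hm : m ≤ m0) {f : Ω → ℝ} (hf : MemLp f 2 μ) :
    MemLp (μ[f|m]) 2 μ := by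
  have hint : Integrable f μ := hf.integrable one_le_two
  set g : Lp ℝ 2 μ := hf.toLp f with hg
  have key : (((condExpL2 ℝ ℝ hm g : lpMeas ℝ ℝ m 2 μ) : Lp ℝ 2 μ) : Ω → ℝ) =ᵐ[μ] μ[f|m] := by
    refine ae_eq_condExp_of_forall_setIntegral_eq hm hint ?_ ?_ ?_
    · intro s _ hμs
      exact integrableOn_condExpL2_of_measure_ne_top hm hμs.ne _
    · intro s hs hμs
      rw [integral_condExpL2_eq hm g hs hμs.ne]
      exact setIntegral_congr_ae (hm s hs) ((hf.coeFn_toLp).mono fun x hx _ => hx)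
    · exact aestronglyMeasurable_condExpL2 hm g
  exact (Lp.memLp _).ae_eq key

/-- pull-out for integrals: if `f` is `m`-strongly measurable and both are L², then
`∫ f g = ∫ f ⋅ E[g|m]`. -/
lemma integral_mul_eq_integral_mul_condexp [IsFiniteMeasure μ] (hm : m ≤ m0) {f g : Ω → ℝ}
    (hfm : StronglyMeasurable[m] f) (hf : MemLp f 2 μ) (hg : MemLp g 2 μ) :
    ∫ ω, f ω * g ω ∂μ = ∫ ω, f ω * (μ[g|m]) ω ∂μ := by
  have hfg : Integrable (fun ω => f ω * g ω) μ := integrable_mul_of_memL2 hf hg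
  have h1 : ∫ ω, f ω * g ω ∂μ = ∫ ω, (μ[fun ω' => f ω' * g ω'|m]) ω ∂μ :=
    (integral_condExp hm).symm
  have h2 : μ[fun ω' => f ω' * g ω'|m] =ᵐ[μ] fun ω => f ω * (μ[g|m]) ω := by
    have := condExp_mul_of_stronglyMeasurable_left hfm (μ := μ) (by exact hfg)
      (hg.integrable one_le_two)
    exact this
  rw [h1, integral_congr_ae h2]




/-- the key series estimate -/
lemma sum_dyadic_bound {v w b : ℝ} (hv : 0 < v) (hw : 0 < w) (hb : 0 < b) (s : Finset ℕ) :
    ∑ k ∈ s, w * 2 ^ (k + 1) / (b + v * 2 ^ k) ^ 2 ≤ 8 * w / (b * v) := by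
  classical
  have hex : ∃ n : ℕ, b < v * 2 ^ n := by
    obtain ⟨n, hn⟩ := pow_unbounded_of_one_lt (b / v) (by norm_num : (1:ℝ) < 2)
    exact ⟨n, by rwa [div_lt_iff₀ hv, mul_comm] at hn⟩
  set k1 := Nat.find hex with hk1def
  have hk1 : b < v * 2 ^ k1 := Nat.find_spec hex
  -- termwise bound
  set g : ℕ → ℝ := fun k => if k < k1 then 2 * w * 2 ^ k / b ^ 2 else (2 * w / v ^ 2) * (1 / 2) ^ k
    with hg
  have hterm : ∀ k, w * 2 ^ (k + 1) / (b + v * 2 ^ k) ^ 2 ≤ g k := by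
    intro k
    have h2k : (0:ℝ) < 2 ^ k := by positivity
    have hden : (0:ℝ) < (b + v * 2 ^ k) ^ 2 := by positivity
    by_cases hk : k < k1
    · have hle : v * 2 ^ k ≤ b := le_of_not_gt (Nat.find_min hex hk)
      have hx : (0:ℝ) ≤ v * 2 ^ k := by positivity
      have hb2 : b ^ 2 ≤ (b + v * 2 ^ k) ^ 2 := by nlinarith
      simp only [hg, if_pos hk]
      rw [div_le_div_iff₀ hden (by positivity)]
      have hnum : w * 2 ^ (k + 1) = 2 * w * 2 ^ k := by ring
      rw [hnum]
      nlinarith [mul_le_mul_of_nonneg_left hb2 (by positivity : (0:ℝ) ≤ 2 * w * 2 ^ k)]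
    · push_neg at hk
      have hv2 : b < v * 2 ^ k := by
        calc b < v * 2 ^ k1 := hk1
        _ ≤ v * 2 ^ k := by
          have := pow_le_pow_right₀ (by norm_num : (1:ℝ) ≤ 2) hk
          nlinarith
      have hsq : (v * 2 ^ k) ^ 2 ≤ (b + v * 2 ^ k) ^ 2 := by nlinarith
      simp only [hg, if_neg (not_lt.2 hk)]
      rw [div_le_iff₀ hden]
      have : (2 * w / v ^ 2) * (1 / 2) ^ k * (v * 2 ^ k) ^ 2 = w * 2 ^ (k + 1) := by
        field_simp
        have h12 : ((1:ℝ) / 2) ^ k * 2 ^ k = 1 := by rw [← mul_pow]; norm_num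
        linear_combination (2 * (2:ℝ) ^ k) * h12
      nlinarith [mul_le_mul_of_nonneg_left hsq
        (by positivity : (0:ℝ) ≤ (2 * w / v ^ 2) * (1 / 2) ^ k)]
  have hgsum : ∑ k ∈ s, g k ≤ 8 * w / (b * v) := by
    -- split into two parts
    have hsplit : ∑ k ∈ s, g k ≤
        (∑ k ∈ Finset.range k1, 2 * w * 2 ^ k / b ^ 2)
        + ∑' k : ℕ, (if k1 ≤ k then (2 * w / v ^ 2) * (1 / 2) ^ k else 0) := by
      have h1 : ∑ k ∈ s, g k = ∑ k ∈ s.filter (· < k1), g k + ∑ k ∈ s.filter (¬ · < k1), g k :=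
        (Finset.sum_filter_add_sum_filter_not s _ g).symm
      have h2 : ∑ k ∈ s.filter (· < k1), g k ≤ ∑ k ∈ Finset.range k1, 2 * w * 2 ^ k / b ^ 2 := by
        rw [show ∑ k ∈ s.filter (· < k1), g k
            = ∑ k ∈ s.filter (· < k1), 2 * w * 2 ^ k / b ^ 2 from
          Finset.sum_congr rfl fun k hk => by
            simp only [hg, if_pos (Finset.mem_filter.1 hk).2]]
        refine Finset.sum_le_sum_of_subset_of_nonneg ?_ (fun k _ _ => by positivity)
        intro k hk
        exact Finset.mem_range.2 (Finset.mem_filter.1 hk).2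
      have hsummable : Summable (fun k : ℕ => (if k1 ≤ k then (2 * w / v ^ 2) * (1 / 2) ^ k else 0)) := by
        apply Summable.of_nonneg_of_le (fun k => by positivity)
          (fun k => ?_) ((summable_geometric_of_lt_one (by norm_num) (by norm_num :
            (1/2 : ℝ) < 1)).mul_left (2 * w / v ^ 2))
        by_cases h : k1 ≤ k <;> simp [h] <;> positivity
      have h3 : ∑ k ∈ s.filter (¬ · < k1), g k ≤
          ∑' k : ℕ, (if k1 ≤ k then (2 * w / v ^ 2) * (1 / 2) ^ k else 0) := by
        rw [show ∑ k ∈ s.filter (¬ · < k1), g k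
            = ∑ k ∈ s.filter (¬ · < k1), (if k1 ≤ k then (2 * w / v ^ 2) * (1 / 2) ^ k else 0) from
          Finset.sum_congr rfl fun k hk => by
            have := (Finset.mem_filter.1 hk).2
            simp only [not_lt] at this
            simp only [hg, if_neg (not_lt.2 this), if_pos this]]
        exact Summable.sum_le_tsum _ (fun k _ => by positivity) hsummable
      linarith
    have hpart1 : ∑ k ∈ Finset.range k1, 2 * w * 2 ^ k / b ^ 2 ≤ 4 * w / (b * v) := by
      have hsum : ∑ k ∈ Finset.range k1, (2:ℝ) ^ k = 2 ^ k1 - 1 := by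
        rw [geom_sum_eq (by norm_num : (2:ℝ) ≠ 1) k1]
        norm_num
      have hfac : ∑ k ∈ Finset.range k1, 2 * w * 2 ^ k / b ^ 2
          = (2 * w / b ^ 2) * (2 ^ k1 - 1) := by
        rw [← hsum, Finset.mul_sum]
        exact Finset.sum_congr rfl fun k _ => by ring
      rw [hfac]
      rcases Nat.eq_zero_or_pos k1 with h | h
      · rw [h]
        norm_num
        positivity
      · have hle : v * 2 ^ (k1 - 1) ≤ b := le_of_not_gt (Nat.find_min hex (by omega))
        have h2k1 : (2:ℝ) ^ k1 ≤ 2 * b / v := by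
          have h21 : (2:ℝ) ^ k1 = 2 * 2 ^ (k1 - 1) := by
            rw [← pow_succ']
            congr 1
            omega
          rw [h21, le_div_iff₀ hv]
          nlinarith
        have e1 : 2 * w / b ^ 2 * (2 * b / v) = 4 * w / (b * v) := by
          field_simp
          ring
        have hpos : (0:ℝ) ≤ 2 * w / b ^ 2 := by positivity
        calc 2 * w / b ^ 2 * (2 ^ k1 - 1) ≤ 2 * w / b ^ 2 * (2 * b / v) := by nlinarith
          _ = 4 * w / (b * v) := e1
    have hpart2 : ∑' k : ℕ, (if k1 ≤ k then (2 * w / v ^ 2) * (1 / 2) ^ k else 0)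
        ≤ 4 * w / (b * v) := by
      set f : ℕ → ℝ := fun k => if k1 ≤ k then (2 * w / v ^ 2) * (1 / 2) ^ k else 0 with hf
      have hsummable : Summable f := by
        apply Summable.of_nonneg_of_le (fun k => by positivity)
          (fun k => ?_) ((summable_geometric_of_lt_one (by norm_num) (by norm_num :
            (1/2 : ℝ) < 1)).mul_left (2 * w / v ^ 2))
        by_cases h : k1 ≤ k <;> simp [hf, h] <;> positivity
      have hshift := Summable.sum_add_tsum_nat_add (f := f) k1 hsummable
      have hzero : ∑ i ∈ Finset.range k1, f i = 0 := by
        apply Finset.sum_eq_zero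
        intro i hi
        simp [hf, Nat.not_le.2 (Finset.mem_range.1 hi)]
      have htail : ∑' i : ℕ, f (i + k1) = (2 * w / v ^ 2) * ((1 / 2) ^ k1 * 2) := by
        have : ∀ i : ℕ, f (i + k1) = ((2 * w / v ^ 2) * (1 / 2) ^ k1) * (1 / 2) ^ i := by
          intro i
          simp only [hf, if_pos (Nat.le_add_left k1 i)]
          rw [pow_add]
          ring
        rw [tsum_congr this, tsum_mul_left,
          tsum_geometric_of_lt_one (by norm_num) (by norm_num : (1/2 : ℝ) < 1)]
        norm_num
        ring
      have : ∑' k, f k = (2 * w / v ^ 2) * ((1 / 2) ^ k1 * 2) := by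
        rw [← hshift, hzero, htail, zero_add]
      rw [this]
      have hhalf : ((1:ℝ) / 2) ^ k1 ≤ v / b := by
        rw [div_pow, one_pow, div_le_div_iff₀ (by positivity) hb]
        nlinarith
      have e2 : 2 * w / v ^ 2 * (v / b * 2) = 4 * w / (b * v) := by
        field_simp
        ring
      have hpos : (0:ℝ) ≤ 2 * w / v ^ 2 := by positivity
      calc 2 * w / v ^ 2 * ((1 / 2) ^ k1 * 2) ≤ 2 * w / v ^ 2 * (v / b * 2) := by nlinarith
        _ = 4 * w / (b * v) := e2
    have hadd : 4 * w / (b * v) + 4 * w / (b * v) = 8 * w / (b * v) := by ring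
    linarith
  calc ∑ k ∈ s, w * 2 ^ (k + 1) / (b + v * 2 ^ k) ^ 2 ≤ ∑ k ∈ s, g k :=
        Finset.sum_le_sum fun k _ => hterm k
    _ ≤ 8 * w / (b * v) := hgsum



variable {Ω : Type*} {m0 : MeasurableSpace Ω}

/-- the region where the process has not yet stopped (strictly before time `j+1`) -/
def Cset (W : ℕ → Ω → ℝ) (τ : Ω → ℕ∞) (b : ℝ) (j : ℕ) : Set Ω :=
  {ω | ∀ i ≤ j, -b < W i ω ∧ (i : ℕ∞) < τ ω}

/-- the stopped increments -/
def Df (W : ℕ → Ω → ℝ) (τ : Ω → ℕ∞) (b : ℝ) (j : ℕ) : Ω → ℝ :=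
  (Cset W τ b j).indicator fun ω => W (j + 1) ω - W j ω

/-- the martingale part of the stopped process -/
def Mf (μ : Measure Ω) (F : Filtration ℕ m0) (W : ℕ → Ω → ℝ) (τ : Ω → ℕ∞) (b : ℝ)
    (n : ℕ) : Ω → ℝ :=
  fun ω => ∑ j ∈ Finset.range n, (Df W τ b j ω - (μ[Df W τ b j|F j]) ω)

variable {μ : Measure Ω} [IsProbabilityMeasure μ] {F : Filtration ℕ m0}
  {W : ℕ → Ω → ℝ} {τ : Ω → ℕ∞} {v w b : ℝ}

lemma Mf_eq_sum (n : ℕ) : Mf μ F W τ b n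
    = ∑ j ∈ Finset.range n, (fun ω => Df W τ b j ω - (μ[Df W τ b j|F j]) ω) := by
  funext ω
  simp [Mf]

section Meas

variable (hadapted : Adapted F W) (hτ : ∀ m : ℕ, MeasurableSet[F m] {ω | τ ω ≤ (m : ℕ∞)})

include hadapted hτ

lemma measurableSet_Cset (j : ℕ) : MeasurableSet[F j] (Cset W τ b j) := by
  have : Cset W τ b j =
      ⋂ (i : ℕ) (_ : i ≤ j), ((W i) ⁻¹' (Set.Ioi (-b)) ∩ {ω | τ ω ≤ (i : ℕ∞)}ᶜ) := by
    ext ω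
    simp only [Cset, Set.mem_setOf_eq, Set.mem_iInter, Set.mem_inter_iff, Set.mem_preimage,
      Set.mem_Ioi, Set.mem_compl_iff, Set.mem_setOf_eq, not_le]
  rw [this]
  refine MeasurableSet.iInter fun i => MeasurableSet.iInter fun hij => ?_
  refine MeasurableSet.inter ?_ ?_
  · exact ((hadapted i).mono (F.mono hij) le_rfl) measurableSet_Ioi
  · exact (F.mono hij _ (hτ i)).compl

lemma stronglyMeasurable_Df (j : ℕ) : StronglyMeasurable[F (j + 1)] (Df W τ b j) := by
  refine StronglyMeasurable.indicator ?_
    (F.mono (Nat.le_succ j) _ (measurableSet_Cset hadapted hτ j))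
  exact (hadapted (j + 1)).stronglyMeasurable.sub ((hadapted j).stronglyMeasurable.mono (F.mono (Nat.le_succ j)))

lemma memL2_DW (hsqint : ∀ m : ℕ, Integrable (fun ω => (W (m + 1) ω - W m ω) ^ 2) μ) (j : ℕ) :
    MemLp (fun ω => W (j + 1) ω - W j ω) 2 μ := by
  refine (memLp_two_iff_integrable_sq ?_).2 (hsqint j)
  exact (show StronglyMeasurable (fun ω => W (j + 1) ω - W j ω) from
    ((hadapted (j + 1)).stronglyMeasurable.mono (F.le _)).sub
    ((hadapted j).stronglyMeasurable.mono (F.le _))).aestronglyMeasurable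

lemma memL2_Df (hsqint : ∀ m : ℕ, Integrable (fun ω => (W (m + 1) ω - W m ω) ^ 2) μ) (j : ℕ) :
    MemLp (Df W τ b j) 2 μ :=
  MemLp.indicator (F.le j _ (measurableSet_Cset hadapted hτ j))
    (memL2_DW hadapted hτ hsqint j)

lemma integral_sq_Df_le (hsqint : ∀ m : ℕ, Integrable (fun ω => (W (m + 1) ω - W m ω) ^ 2) μ)
    (hvar : ∀ m : ℕ, ∫ ω, (W (m + 1) ω - W m ω) ^ 2 ∂μ ≤ w) (j : ℕ) :
    ∫ ω, (Df W τ b j ω) ^ 2 ∂μ ≤ w := by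
  refine le_trans ?_ (hvar j)
  refine integral_mono ((memL2_Df (b := b) hadapted hτ hsqint j).integrable_sq) (hsqint j) ?_
  intro ω
  by_cases hω : ω ∈ Cset W τ b j
  · simp [Df, Set.indicator_of_mem hω]
  · simp only [Df, Set.indicator_of_notMem hω]
    simpa using sq_nonneg (W (j + 1) ω - W j ω)

end Meas

section Mart

variable (hadapted : Adapted F W) (hτ : ∀ m : ℕ, MeasurableSet[F m] {ω | τ ω ≤ (m : ℕ∞)})
  (hsqint : ∀ m : ℕ, Integrable (fun ω => (W (m + 1) ω - W m ω) ^ 2) μ)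
  (hvar : ∀ m : ℕ, ∫ ω, (W (m + 1) ω - W m ω) ^ 2 ∂μ ≤ w)

include hadapted hτ hsqint

lemma memL2_G (j : ℕ) : MemLp (μ[Df W τ b j|F j]) 2 μ :=
  memL2_condexp (F.le j) (memL2_Df (b := b) hadapted hτ hsqint j)

lemma memL2_diff (j : ℕ) : MemLp (fun ω => Df W τ b j ω - (μ[Df W τ b j|F j]) ω) 2 μ :=
  (memL2_Df (b := b) hadapted hτ hsqint j).sub (memL2_G (b := b) hadapted hτ hsqint j)

lemma condexp_diff_eq_zero (j : ℕ) :
    μ[fun ω => Df W τ b j ω - (μ[Df W τ b j|F j]) ω|F j] =ᵐ[μ] 0 := by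
  have hDint : Integrable (Df W τ b j) μ :=
    (memL2_Df (b := b) hadapted hτ hsqint j).integrable one_le_two
  have h1 : μ[fun ω => Df W τ b j ω - (μ[Df W τ b j|F j]) ω|F j]
      =ᵐ[μ] μ[Df W τ b j|F j] - μ[μ[Df W τ b j|F j]|F j] := by
    have := condExp_sub (m := F j) (μ := μ) hDint integrable_condExp
      (f := Df W τ b j) (g := μ[Df W τ b j|F j])
    exact this
  have h2 : μ[μ[Df W τ b j|F j]|F j] = μ[Df W τ b j|F j] :=
    condExp_of_stronglyMeasurable (F.le j) stronglyMeasurable_condExp integrable_condExp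
  refine h1.trans ?_
  rw [h2]
  simp

lemma stronglyMeasurable_Mf (n : ℕ) : StronglyMeasurable[F n] (Mf μ F W τ b n) := by
  rw [Mf_eq_sum (b := b)]
  refine Finset.stronglyMeasurable_sum _ fun j hj => ?_
  have hj' : j + 1 ≤ n := Finset.mem_range.1 hj
  exact (((stronglyMeasurable_Df (b := b) hadapted hτ j).mono (F.mono hj')).sub
    (stronglyMeasurable_condExp.mono (F.mono (le_trans (Nat.le_succ j) hj'))))

lemma memL2_Mf (n : ℕ) : MemLp (Mf μ F W τ b n) 2 μ := by
  rw [Mf_eq_sum (b := b)]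
  exact memLp_finset_sum' _ fun j _ => memL2_diff (b := b) hadapted hτ hsqint j

include hvar

lemma integral_sq_diff_le (j : ℕ) :
    ∫ ω, (Df W τ b j ω - (μ[Df W τ b j|F j]) ω) ^ 2 ∂μ ≤ w := by
  set G : Ω → ℝ := μ[Df W τ b j|F j] with hG
  have hDL2 := memL2_Df (b := b) hadapted hτ hsqint j
  have hGL2 : MemLp G 2 μ := memL2_G (b := b) hadapted hτ hsqint j
  have hpull : ∫ ω, G ω * Df W τ b j ω ∂μ = ∫ ω, G ω * G ω ∂μ := by
    simpa using integral_mul_eq_integral_mul_condexp (F.le j)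
      stronglyMeasurable_condExp hGL2 hDL2
  have hexp : ∀ ω, (Df W τ b j ω - G ω) ^ 2
      = Df W τ b j ω ^ 2 - 2 * (G ω * Df W τ b j ω) + G ω * G ω := by
    intro ω; ring
  have hint1 : Integrable (fun ω => Df W τ b j ω ^ 2) μ := hDL2.integrable_sq
  have hint2 : Integrable (fun ω => G ω * Df W τ b j ω) μ := integrable_mul_of_memL2 hGL2 hDL2
  have hint3 : Integrable (fun ω => G ω * G ω) μ := integrable_mul_of_memL2 hGL2 hGL2
  calc ∫ ω, (Df W τ b j ω - G ω) ^ 2 ∂μ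
      = ∫ ω, (Df W τ b j ω ^ 2 - 2 * (G ω * Df W τ b j ω) + G ω * G ω) ∂μ := by
        exact integral_congr_ae (Filter.Eventually.of_forall fun ω => hexp ω)
    _ = ∫ ω, Df W τ b j ω ^ 2 ∂μ - 2 * ∫ ω, G ω * Df W τ b j ω ∂μ + ∫ ω, G ω * G ω ∂μ := by
        have hint12 : Integrable (fun ω => Df W τ b j ω ^ 2 - 2 * (G ω * Df W τ b j ω)) μ :=
          hint1.sub (hint2.const_mul 2)
        rw [integral_add hint12 hint3, integral_sub hint1 (hint2.const_mul 2),
          integral_const_mul]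
    _ = ∫ ω, Df W τ b j ω ^ 2 ∂μ - ∫ ω, G ω * G ω ∂μ := by rw [hpull]; ring
    _ ≤ ∫ ω, Df W τ b j ω ^ 2 ∂μ := by
        have : 0 ≤ ∫ ω, G ω * G ω ∂μ := by
          refine integral_nonneg fun ω => mul_self_nonneg _
        linarith
    _ ≤ w := integral_sq_Df_le (b := b) hadapted hτ hsqint hvar j

lemma integral_sq_Mf_le (n : ℕ) : ∫ ω, (Mf μ F W τ b n ω) ^ 2 ∂μ ≤ w * n := by
  induction n with
  | zero => simp [Mf]
  | succ n ih =>
    set Δ : Ω → ℝ := fun ω => Df W τ b n ω - (μ[Df W τ b n|F n]) ω with hΔ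
    have hstep : ∀ ω, Mf μ F W τ b (n + 1) ω = Mf μ F W τ b n ω + Δ ω := by
      intro ω
      simp only [Mf, Finset.sum_range_succ, hΔ]
      try ring
    have hML2 := memL2_Mf (b := b) hadapted hτ hsqint n
    have hΔL2 := memL2_diff (b := b) hadapted hτ hsqint n
    have horth : ∫ ω, Mf μ F W τ b n ω * Δ ω ∂μ = 0 := by
      rw [integral_mul_eq_integral_mul_condexp (F.le n)
        (stronglyMeasurable_Mf (b := b) hadapted hτ hsqint n) hML2 hΔL2]
      have h0 := condexp_diff_eq_zero (b := b) hadapted hτ hsqint n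
      rw [show (0:ℝ) = ∫ ω, Mf μ F W τ b n ω * 0 ∂μ by simp]
      refine integral_congr_ae ?_
      filter_upwards [h0] with ω hω
      rw [show (μ[Δ|F n]) ω = 0 from hω]
    have hint1 : Integrable (fun ω => Mf μ F W τ b n ω ^ 2) μ := hML2.integrable_sq
    have hint2 : Integrable (fun ω => Mf μ F W τ b n ω * Δ ω) μ :=
      integrable_mul_of_memL2 hML2 hΔL2
    have hint3 : Integrable (fun ω => Δ ω ^ 2) μ := hΔL2.integrable_sq
    have hΔle := integral_sq_diff_le (b := b) hadapted hτ hsqint hvar n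
    calc ∫ ω, (Mf μ F W τ b (n + 1) ω) ^ 2 ∂μ
        = ∫ ω, (Mf μ F W τ b n ω ^ 2 + 2 * (Mf μ F W τ b n ω * Δ ω) + Δ ω ^ 2) ∂μ := by
          refine integral_congr_ae (Filter.Eventually.of_forall fun ω => ?_)
          beta_reduce
          rw [hstep ω]; ring
      _ = ∫ ω, Mf μ F W τ b n ω ^ 2 ∂μ + 2 * ∫ ω, Mf μ F W τ b n ω * Δ ω ∂μ
          + ∫ ω, Δ ω ^ 2 ∂μ := by
          have hint12 : Integrable
              (fun ω => Mf μ F W τ b n ω ^ 2 + 2 * (Mf μ F W τ b n ω * Δ ω)) μ :=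
            hint1.add (hint2.const_mul 2)
          rw [integral_add hint12 hint3, integral_add hint1 (hint2.const_mul 2),
            integral_const_mul]
      _ ≤ w * ↑(n + 1) := by rw [horth]; push_cast; linarith

lemma submartingale_sq_Mf : Submartingale (fun n => fun ω => (Mf μ F W τ b n ω) ^ 2) F μ := by
  refine submartingale_nat (fun n => ?_)
    (fun n => (memL2_Mf (b := b) hadapted hτ hsqint n).integrable_sq) (fun n => ?_)
  · have hsm := stronglyMeasurable_Mf (b := b) hadapted hτ hsqint n
    simpa [pow_two, Pi.mul_def] using hsm.mul hsm
  · set Δ : Ω → ℝ := fun ω => Df W τ b n ω - (μ[Df W τ b n|F n]) ω with hΔdef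
    have hML2 := memL2_Mf (b := b) hadapted hτ hsqint n
    have hΔL2 : MemLp Δ 2 μ := memL2_diff (b := b) hadapted hτ hsqint n
    have hMsm := stronglyMeasurable_Mf (b := b) hadapted hτ hsqint n
    have hintMsq : Integrable (fun ω => Mf μ F W τ b n ω ^ 2) μ := hML2.integrable_sq
    have hintMΔ : Integrable (fun ω => 2 * Mf μ F W τ b n ω * Δ ω) μ := by
      have := integrable_mul_of_memL2 (hML2.const_mul 2) hΔL2
      simpa [mul_assoc] using this
    have hintΔsq : Integrable (fun ω => Δ ω ^ 2) μ := hΔL2.integrable_sq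
    have h1 : μ[fun ω => Mf μ F W τ b (n + 1) ω ^ 2|F n]
        =ᵐ[μ] μ[(fun ω => Mf μ F W τ b n ω ^ 2) + ((fun ω => 2 * Mf μ F W τ b n ω * Δ ω)
          + (fun ω => Δ ω ^ 2))|F n] := by
      refine condExp_congr_ae (Filter.Eventually.of_forall fun ω => ?_)
      have hstep : Mf μ F W τ b (n + 1) ω = Mf μ F W τ b n ω + Δ ω := by
        simp only [Mf, Finset.sum_range_succ, hΔdef]
        try ring
      simp only [Pi.add_apply]
      rw [hstep]
      ring
    have h2 := condExp_add (μ := μ) (m := F n) hintMsq (hintMΔ.add hintΔsq)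
    have h3 := condExp_add (μ := μ) (m := F n) hintMΔ hintΔsq
    have h4 : μ[fun ω => Mf μ F W τ b n ω ^ 2|F n] = fun ω => Mf μ F W τ b n ω ^ 2 :=
      condExp_of_stronglyMeasurable (F.le n)
        (by simpa [pow_two, Pi.mul_def] using hMsm.mul hMsm) hintMsq
    have h5 : μ[fun ω => 2 * Mf μ F W τ b n ω * Δ ω|F n]
        =ᵐ[μ] fun ω => 2 * Mf μ F W τ b n ω * (μ[Δ|F n]) ω := by
      have hmul := condExp_mul_of_stronglyMeasurable_left (μ := μ)
        (f := fun ω => 2 * Mf μ F W τ b n ω) (g := Δ)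
        (hMsm.const_mul 2) hintMΔ (hΔL2.integrable one_le_two)
      exact hmul
    have h0 := condexp_diff_eq_zero (b := b) hadapted hτ hsqint n
    have h6 : (0 : Ω → ℝ) ≤ᵐ[μ] μ[fun ω => Δ ω ^ 2|F n] :=
      condExp_nonneg (Filter.Eventually.of_forall fun ω => sq_nonneg _)
    filter_upwards [h1, h2, h3, h5, h0, h6] with ω e1 e2 e3 e5 e0 e6
    have h4' := congrFun h4 ω
    simp only [Pi.add_apply, Pi.zero_apply] at e1 e2 e3 e5 e0 e6 h4' ⊢
    rw [e1, e2, e3, e5, e0, h4']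
    nlinarith [e6]


lemma kolmogorov_bound {lam : ℝ} (hlam : 0 < lam) (N : ℕ) :
    μ {ω | ∃ t ≤ N, Mf μ F W τ b t ω ≤ -lam}
      ≤ ENNReal.ofReal (w * N / lam ^ 2) := by
  classical
  set f : ℕ → Ω → ℝ := fun n => fun ω => (Mf μ F W τ b n ω) ^ 2 with hf
  have hsub : Submartingale f F μ := submartingale_sq_Mf (b := b) hadapted hτ hsqint hvar
  have hnonneg : 0 ≤ f := fun n ω => sq_nonneg _
  set ε : ℝ≥0 := ⟨lam ^ 2, sq_nonneg lam⟩ with hε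
  set S := {ω | (ε : ℝ) ≤ (Finset.range (N + 1)).sup' Finset.nonempty_range_add_one
    fun k => f k ω} with hS
  have hsubset : {ω | ∃ t ≤ N, Mf μ F W τ b t ω ≤ -lam} ⊆ S := by
    rintro ω ⟨t, htN, hle⟩
    have h1 : lam ^ 2 ≤ f t ω := by
      simp only [hf]
      nlinarith
    have h2 : f t ω ≤ (Finset.range (N + 1)).sup' Finset.nonempty_range_add_one
        fun k => f k ω :=
      Finset.le_sup' (f := fun k => f k ω) (Finset.mem_range.2 (Nat.lt_succ_of_le htN))
    exact le_trans h1 h2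
  have hmax := maximal_ineq hsub hnonneg (ε := ε) N
  have hint : Integrable (f N) μ := (memL2_Mf (b := b) hadapted hτ hsqint N).integrable_sq
  have h5 : ∫ ω in S, f N ω ∂μ ≤ ∫ ω, f N ω ∂μ :=
    setIntegral_le_integral hint (Filter.Eventually.of_forall fun ω => sq_nonneg _)
  have h6 : ∫ ω, f N ω ∂μ ≤ w * N := integral_sq_Mf_le (b := b) hadapted hτ hsqint hvar N
  have hεμ : (ε : ℝ≥0∞) * μ S ≤ ENNReal.ofReal (w * N) := by
    refine le_trans ?_ (le_trans hmax (ENNReal.ofReal_le_ofReal (h5.trans h6)))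
    exact le_rfl
  have hεne : (ε : ℝ≥0∞) ≠ 0 := by
    simp only [ne_eq, ENNReal.coe_eq_zero]
    intro hc
    have hcc := congrArg (fun x : ℝ≥0 => (x : ℝ)) hc
    simp only [hε, NNReal.coe_mk, NNReal.coe_zero] at hcc
    change lam ^ 2 = 0 at hcc
    nlinarith
  have hεtop : (ε : ℝ≥0∞) ≠ ⊤ := ENNReal.coe_ne_top
  have hμS : μ S ≤ ENNReal.ofReal (w * N) / (ε : ℝ≥0∞) := by
    rw [ENNReal.le_div_iff_mul_le (Or.inl hεne) (Or.inl hεtop), mul_comm]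
    exact hεμ
  have heq : ENNReal.ofReal (w * N) / (ε : ℝ≥0∞) = ENNReal.ofReal (w * N / lam ^ 2) := by
    rw [ENNReal.ofReal_div_of_pos (by positivity : (0:ℝ) < lam ^ 2),
      ENNReal.ofReal_eq_coe_nnreal (sq_nonneg lam)]
    rfl
  calc μ {ω | ∃ t ≤ N, Mf μ F W τ b t ω ≤ -lam} ≤ μ S := measure_mono hsubset
    _ ≤ ENNReal.ofReal (w * N) / (ε : ℝ≥0∞) := hμS
    _ = ENNReal.ofReal (w * N / lam ^ 2) := heq

end Mart

section Drift

variable (hadapted : Adapted F W) (hτ : ∀ m : ℕ, MeasurableSet[F m] {ω | τ ω ≤ (m : ℕ∞)})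
  (hsqint : ∀ m : ℕ, Integrable (fun ω => (W (m + 1) ω - W m ω) ^ 2) μ)

include hadapted hτ hsqint

lemma drift_bound
    (hdrift : ∀ m : ℕ, ∀ᵐ ω ∂μ, (m : ℕ∞) < τ ω →
      v ≤ (μ[fun ω' => W (m + 1) ω' - W m ω' | F m]) ω) :
    ∀ᵐ ω ∂μ, ∀ j : ℕ, ω ∈ Cset W τ b j → v ≤ (μ[Df W τ b j|F j]) ω := by
  rw [ae_all_iff]
  intro j
  have hint : Integrable (fun ω => W (j + 1) ω - W j ω) μ :=
    (memL2_DW hadapted hτ hsqint j).integrable one_le_two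
  have hind : μ[Df W τ b j|F j]
      =ᵐ[μ] (Cset W τ b j).indicator (μ[fun ω => W (j + 1) ω - W j ω|F j]) :=
    condExp_indicator hint (measurableSet_Cset (b := b) hadapted hτ j)
  filter_upwards [hind, hdrift j] with ω h1 h2 hmem
  have hjτ : (j : ℕ∞) < τ ω := (hmem j le_rfl).2
  calc v ≤ (μ[fun ω' => W (j + 1) ω' - W j ω'|F j]) ω := h2 hjτ
    _ = (μ[Df W τ b j|F j]) ω := by
      rw [h1, Set.indicator_of_mem hmem]

end Drift


end RWAux

/-- Lemma 4.2: if `(W_m)` is adapted to `(F_m)` with `W_0 = 0`, `τ` is a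
stopping time, `E[ΔW_{m+1} | F_m] ≥ v` a.s. on `{m < τ}` and
`E[(ΔW_{m+1})²] ≤ w`, then `P(inf_{0 ≤ m ≤ τ} W_m ≤ −b) ≤ 8w/(bv)`. -/
theorem random_walk_positive_drift_infimum_bound
    {Ω : Type*} {m0 : MeasurableSpace Ω} (μ : Measure Ω) [IsProbabilityMeasure μ]
    (F : Filtration ℕ m0)
    (W : ℕ → Ω → ℝ) (hadapted : Adapted F W) (hW0 : ∀ ω, W 0 ω = 0)
    -- τ ≤ ∞ is a stopping time for (F_m)
    (τ : Ω → ℕ∞) (hτ : ∀ m : ℕ, MeasurableSet[F m] {ω | τ ω ≤ (m : ℕ∞)})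
    (v w : ℝ) (hv : 0 < v) (hw : 0 < w)
    (hsqint : ∀ m : ℕ, Integrable (fun ω => (W (m + 1) ω - W m ω) ^ 2) μ)
    -- E[W_{m+1} − W_m | F_m] ≥ v a.s. on {m < τ}
    (hdrift : ∀ m : ℕ, ∀ᵐ ω ∂μ, (m : ℕ∞) < τ ω →
      v ≤ (μ[fun ω' => W (m + 1) ω' - W m ω' | F m]) ω)
    -- E[(W_{m+1} − W_m)²] ≤ w
    (hvar : ∀ m : ℕ, ∫ ω, (W (m + 1) ω - W m ω) ^ 2 ∂μ ≤ w)
    (b : ℝ) (hb : 0 < b) :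
    μ {ω | ∃ m : ℕ, (m : ℕ∞) ≤ τ ω ∧ W m ω ≤ -b} ≤ ENNReal.ofReal (8 * w / (b * v)) := by
  classical
  set Ek : ℕ → Set Ω := fun k =>
    {ω | ∃ t : ℕ, 2 ^ k ≤ t ∧ t < 2 ^ (k + 1) ∧ RWAux.Mf μ F W τ b t ω ≤ -(b + v * 2 ^ k)} with hEk
  have hgood := RWAux.drift_bound (b := b) (v := v) hadapted hτ hsqint hdrift
  have hincl : ∀ᵐ ω ∂μ, (∃ m : ℕ, (m : ℕ∞) ≤ τ ω ∧ W m ω ≤ -b) → ω ∈ ⋃ k, Ek k := by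
    filter_upwards [hgood] with ω hg hE
    obtain ⟨m', hm'1, hm'2⟩ := hE
    have hexP : ∃ m : ℕ, ¬(-b < W m ω ∧ (m : ℕ∞) < τ ω) :=
      ⟨m', fun hc => absurd hm'2 (not_le.2 hc.1)⟩
    set t := Nat.find hexP with htdef
    have htspec : ¬(-b < W t ω ∧ (t : ℕ∞) < τ ω) := Nat.find_spec hexP
    have htmin : ∀ i, i < t → -b < W i ω ∧ (i : ℕ∞) < τ ω := fun i hi =>
      not_not.1 (Nat.find_min hexP hi)
    have htle : t ≤ m' := Nat.find_le (fun hc => absurd hm'2 (not_le.2 hc.1))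
    have hWt : W t ω ≤ -b := by
      by_contra hcon
      push_neg at hcon
      have hτt : τ ω ≤ (t : ℕ∞) := by
        by_contra hc2
        push_neg at hc2
        exact htspec ⟨hcon, hc2⟩
      have hca : (m' : ℕ∞) ≤ (t : ℕ∞) := le_trans hm'1 hτt
      have hm't : m' ≤ t := by exact_mod_cast hca
      have hteq : t = m' := le_antisymm htle hm't
      rw [hteq] at hcon
      linarith
    have ht1 : 1 ≤ t := by
      rcases Nat.eq_zero_or_pos t with h0 | h
      · exfalso
        rw [h0, hW0 ω] at hWt
        linarith
      · exact h
    have hC : ∀ j, j < t → ω ∈ RWAux.Cset W τ b j := fun j hj i hij =>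
      htmin i (lt_of_le_of_lt hij hj)
    have hDval : ∀ j ∈ Finset.range t, RWAux.Df W τ b j ω = W (j + 1) ω - W j ω :=
      fun j hj => Set.indicator_of_mem (hC j (Finset.mem_range.1 hj)) _
    have hsumD : ∑ j ∈ Finset.range t, RWAux.Df W τ b j ω = W t ω := by
      rw [Finset.sum_congr rfl hDval, Finset.sum_range_sub (f := fun i => W i ω), hW0 ω, sub_zero]
    have hsumG : (t : ℝ) * v ≤ ∑ j ∈ Finset.range t, (μ[RWAux.Df W τ b j|F j]) ω := by
      have hvj : ∀ j ∈ Finset.range t, v ≤ (μ[RWAux.Df W τ b j|F j]) ω :=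
        fun j hj => hg j (hC j (Finset.mem_range.1 hj))
      calc (t : ℝ) * v = ∑ _j ∈ Finset.range t, v := by
            rw [Finset.sum_const, Finset.card_range, nsmul_eq_mul]
        _ ≤ _ := Finset.sum_le_sum hvj
    have hMt : RWAux.Mf μ F W τ b t ω ≤ -b - v * t := by
      have hM : RWAux.Mf μ F W τ b t ω
          = (∑ j ∈ Finset.range t, RWAux.Df W τ b j ω) - ∑ j ∈ Finset.range t, (μ[RWAux.Df W τ b j|F j]) ω := by
        simp [RWAux.Mf, Finset.sum_sub_distrib]
      rw [hM, hsumD]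
      nlinarith
    set k := Nat.log 2 t with hkdef
    have hk1 : 2 ^ k ≤ t := Nat.pow_log_le_self 2 (by omega)
    have hk2 : t < 2 ^ (k + 1) := Nat.lt_pow_succ_log_self (by norm_num) t
    refine Set.mem_iUnion.2 ⟨k, ⟨t, hk1, hk2, ?_⟩⟩
    have hcast : (2 : ℝ) ^ k ≤ (t : ℝ) := by exact_mod_cast hk1
    nlinarith [hMt, hv.le, mul_le_mul_of_nonneg_left hcast hv.le]
  have h1 : μ {ω | ∃ m : ℕ, (m : ℕ∞) ≤ τ ω ∧ W m ω ≤ -b} ≤ μ (⋃ k, Ek k) := by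
    refine measure_mono_ae ?_
    filter_upwards [hincl] with ω h
    exact h
  have h2 : μ (⋃ k, Ek k) ≤ ∑' k, μ (Ek k) := measure_iUnion_le _
  have h3 : ∀ k : ℕ, μ (Ek k) ≤
      ENNReal.ofReal (w * (2 ^ (k + 1) : ℕ) / (b + v * 2 ^ k) ^ 2) := by
    intro k
    have hlam : (0:ℝ) < b + v * 2 ^ k := by positivity
    refine le_trans (measure_mono ?_)
      (RWAux.kolmogorov_bound (b := b) hadapted hτ hsqint hvar hlam (2 ^ (k + 1)))
    rintro ω ⟨t, _ht1, ht2, ht3⟩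
    exact ⟨t, le_of_lt ht2, ht3⟩
  have h4 : (∑' k : ℕ, ENNReal.ofReal (w * (2 ^ (k + 1) : ℕ) / (b + v * 2 ^ k) ^ 2))
      ≤ ENNReal.ofReal (8 * w / (b * v)) := by
    rw [ENNReal.tsum_eq_iSup_sum]
    refine iSup_le fun s => ?_
    rw [← ENNReal.ofReal_sum_of_nonneg (fun i _ => by positivity)]
    refine ENNReal.ofReal_le_ofReal ?_
    refine le_trans (le_of_eq ?_) (RWAux.sum_dyadic_bound hv hw hb s)
    refine Finset.sum_congr rfl fun k _ => ?_
    push_cast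
    ring
  exact le_trans h1 (le_trans h2 (le_trans (ENNReal.tsum_le_tsum h3) h4))
end
end

section
/- Suppose assumptions (D1), (D2) and α_n → 0 hold, and define R₀ := (β_n/(ρ_n+β_n)) · Σ_k (k−1)k n_S(k) / Σ_k k n_k. Then: ρ_n/β_n = O(1); Σ_k k n_k = O(n_S) while Σ_k k n_k/n_S is also bounded below by a positive constant; R₀ → 1; and α_n = (1+o(1)) λ₂ (R₀ − 1), so that (R₀ − 1)/α_n is bounded above and below by positive constants. Conversely, under (D1) and (D2), if R₀ → 1 then α_n → 0. -/
open MeasureTheory Filter Topology Asymptotics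
open scoped ENNReal NNReal

noncomputable section

set_option maxHeartbeats 1000000

lemma summable_of_support_finite {f : ℕ → ℝ} (h : (Function.support f).Finite) :
    Summable f := by
  apply summable_of_ne_finset_zero (s := h.toFinset)
  intro b hb
  by_contra hb'
  exact hb (h.mem_toFinset.2 hb')

lemma weighted_tendsto
    (nS : ℕ → ℕ) (hnSpos : ∀ n, 0 < nS n)
    (nSk : ℕ → ℕ → ℕ) (hfin : ∀ n, (Function.support fun k => (nSk n k : ℝ)).Finite)
    (p : ℕ → ℝ) (hppos : ∀ k, 0 ≤ p k)
    (hD1 : ∀ k, Tendsto (fun n => (nSk n k : ℝ) / (nS n : ℝ)) atTop (𝓝 (p k)))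
    (hD2 : ∀ ε : ℝ, 0 < ε → ∃ M : ℕ, ∀ n,
      (∑' k : ℕ, if M < k then (k : ℝ) ^ 3 * (nSk n k : ℝ) else 0) / (nS n : ℝ) < ε)
    (w : ℕ → ℝ) (hw : ∀ k, |w k| ≤ (k : ℝ) ^ 3) :
    Tendsto (fun n => (∑' k : ℕ, w k * (nSk n k : ℝ)) / (nS n : ℝ)) atTop
      (𝓝 (∑' k : ℕ, w k * p k)) := by
  have hnSR : ∀ n, (0:ℝ) < (nS n : ℝ) := fun n => by exact_mod_cast hnSpos n
  set g : ℕ → ℕ → ℝ := fun n k => (nSk n k : ℝ) / (nS n : ℝ) with hgdef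
  have hgfin : ∀ n, (Function.support (g n)).Finite := by
    intro n
    apply Set.Finite.subset (hfin n)
    intro k hk
    simp only [Function.mem_support, hgdef] at hk ⊢
    intro h0
    simp [h0] at hk
  have hgnonneg : ∀ n k, 0 ≤ g n k := fun n k =>
    div_nonneg (Nat.cast_nonneg _) (Nat.cast_nonneg _)
  have hsum_mul : ∀ (u : ℕ → ℝ) (n : ℕ), Summable (fun k => u k * g n k) := by
    intro u n
    apply summable_of_support_finite
    apply Set.Finite.subset (hgfin n)
    intro k hk
    simp only [Function.mem_support] at hk ⊢
    intro h0; simp [h0] at hk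
  have hsum_ite : ∀ (M : ℕ) (u : ℕ → ℝ) (n : ℕ),
      Summable (fun k => if M < k then u k * g n k else 0) := by
    intro M u n
    apply summable_of_support_finite
    apply Set.Finite.subset (hgfin n)
    intro k hk
    simp only [Function.mem_support] at hk ⊢
    intro h0; simp [h0] at hk
  have hrw : ∀ n, (∑' k : ℕ, w k * (nSk n k : ℝ)) / (nS n : ℝ) = ∑' k, w k * g n k := by
    intro n
    rw [← tsum_div_const]
    congr 1; funext k; rw [mul_div_assoc]
  -- tail bound for g, uniform in n
  have htailg : ∀ ε : ℝ, 0 < ε → ∃ M : ℕ, ∀ n,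
      (∑' k : ℕ, if M < k then (k : ℝ) ^ 3 * g n k else 0) < ε := by
    intro ε hε
    obtain ⟨M, hM⟩ := hD2 ε hε
    refine ⟨M, fun n => ?_⟩
    have h1 := hM n
    rw [← tsum_div_const] at h1
    have heq : (∑' k : ℕ, if M < k then (k : ℝ) ^ 3 * g n k else 0) =
        ∑' (x : ℕ), (if M < x then (x:ℝ) ^ 3 * (nSk n x : ℝ) else 0) / (nS n : ℝ) := by
      apply tsum_congr
      intro k
      by_cases h : M < k <;> simp [h, mul_div_assoc, hgdef]
    rw [heq]
    exact h1
  -- tail bound for p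
  have htailp : ∀ ε : ℝ, 0 < ε → ∃ M : ℕ,
      (∀ n, (∑' k : ℕ, if M < k then (k : ℝ) ^ 3 * g n k else 0) < ε) ∧
      Summable (fun k => if M < k then (k : ℝ) ^ 3 * p k else 0) ∧
      (∑' k : ℕ, if M < k then (k : ℝ) ^ 3 * p k else 0) ≤ ε := by
    intro ε hε
    obtain ⟨M, hM⟩ := htailg ε hε
    have hnn : ∀ k, 0 ≤ (if M < k then (k : ℝ) ^ 3 * p k else 0) := by
      intro k
      split
      · exact mul_nonneg (by positivity) (hppos k)
      · exact le_refl 0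
    have hpart : ∀ N, ∑ k ∈ Finset.range N, (if M < k then (k : ℝ) ^ 3 * p k else 0) ≤ ε := by
      intro N
      have hlim : Tendsto (fun n => ∑ k ∈ Finset.range N,
          (if M < k then (k : ℝ) ^ 3 * g n k else 0)) atTop
          (𝓝 (∑ k ∈ Finset.range N, (if M < k then (k : ℝ) ^ 3 * p k else 0))) := by
        apply tendsto_finset_sum
        intro k _
        by_cases h : M < k
        · simpa [h] using (hD1 k).const_mul ((k:ℝ)^3)
        · simp only [h, if_false]
          exact tendsto_const_nhds
      apply le_of_tendsto hlim
      filter_upwards with n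
      calc ∑ k ∈ Finset.range N, (if M < k then (k : ℝ) ^ 3 * g n k else 0)
          ≤ ∑' k : ℕ, (if M < k then (k : ℝ) ^ 3 * g n k else 0) := by
            apply Summable.sum_le_tsum
            · intro k _
              split
              · exact mul_nonneg (by positivity) (hgnonneg n k)
              · exact le_refl 0
            · exact hsum_ite M _ n
        _ ≤ ε := le_of_lt (hM n)
    have hs : Summable (fun k => if M < k then (k : ℝ) ^ 3 * p k else 0) :=
      summable_of_sum_range_le hnn hpart
    exact ⟨M, hM, hs, Summable.tsum_le_of_sum_range_le hs hpart⟩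
  -- summability of k^3 * p
  have hp3 : Summable (fun k : ℕ => (k : ℝ) ^ 3 * p k) := by
    obtain ⟨M, _, hs, _⟩ := htailp 1 one_pos
    have heq : (fun k : ℕ => (k : ℝ) ^ 3 * p k) =
        (fun k => if M < k then (k : ℝ) ^ 3 * p k else 0) +
        (fun k => if M < k then 0 else (k : ℝ) ^ 3 * p k) := by
      funext k; by_cases h : M < k <;> simp [h]
    rw [heq]
    apply hs.add
    apply summable_of_ne_finset_zero (s := Finset.range (M+1))
    intro b hb
    have : M < b := by simpa using hb
    simp [this]
  have hwp : Summable (fun k => w k * p k) := by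
    apply Summable.of_norm_bounded hp3
    intro k
    rw [norm_mul, Real.norm_eq_abs, Real.norm_eq_abs, abs_of_nonneg (hppos k)]
    exact mul_le_mul_of_nonneg_right (hw k) (hppos k)
  -- main estimate
  have hmain : Tendsto (fun n => ∑' k, w k * g n k) atTop (𝓝 (∑' k : ℕ, w k * p k)) := by
    rw [Metric.tendsto_atTop]
    intro ε hε
    have hε4 : 0 < ε / 4 := by linarith
    obtain ⟨M, hMg, hMps, hMp⟩ := htailp (ε/4) hε4
    have hhead : Tendsto (fun n => ∑ k ∈ Finset.range (M+1),
        (if M < k then 0 else |w k| * |g n k - p k|)) atTop (𝓝 0) := by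
      have hterm : ∀ k ∈ Finset.range (M+1), Tendsto
          (fun n => if M < k then (0:ℝ) else |w k| * |g n k - p k|) atTop (𝓝 0) := by
        intro k _
        by_cases h : M < k
        · simp only [h, if_true]
          exact tendsto_const_nhds
        · simp only [h, if_false]
          have h1 : Tendsto (fun n => g n k - p k) atTop (𝓝 0) := by
            simpa using (hD1 k).sub_const (p k)
          have h2 := h1.abs.const_mul |w k|
          simpa using h2
      have hhead0 := tendsto_finset_sum (Finset.range (M+1)) hterm
      rw [Finset.sum_const_zero] at hhead0
      exact hhead0
    have hheadev : ∀ᶠ n in atTop, ∑ k ∈ Finset.range (M+1),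
        (if M < k then 0 else |w k| * |g n k - p k|) < ε/4 :=
      hhead.eventually (eventually_lt_nhds hε4)
    rw [eventually_atTop] at hheadev
    obtain ⟨N, hN⟩ := hheadev
    refine ⟨N, fun n hn => ?_⟩
    rw [Real.dist_eq]
    have hsumtailg := hsum_ite M (fun k => (k:ℝ)^3) n
    have hsumhead : Summable (fun k => if M < k then (0:ℝ) else |w k| * |g n k - p k|) := by
      apply summable_of_ne_finset_zero (s := Finset.range (M+1))
      intro b hb
      have : M < b := by simpa using hb
      simp [this]
    have hdiffsum : Summable (fun k => w k * g n k - w k * p k) :=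
      (hsum_mul w n).sub hwp
    have step1 : |∑' k, w k * g n k - ∑' k, w k * p k| ≤ ∑' k, |w k * g n k - w k * p k| := by
      rw [← Summable.tsum_sub (hsum_mul w n) hwp]
      simpa using norm_tsum_le_tsum_norm (f := fun k => w k * g n k - w k * p k)
        (by simpa using hdiffsum.abs)
    have step2 : ∑' k, |w k * g n k - w k * p k| ≤
        ∑' k, ((if M < k then (k : ℝ)^3 * g n k else 0) +
               ((if M < k then (k : ℝ)^3 * p k else 0) +
                (if M < k then 0 else |w k| * |g n k - p k|))) := by
      apply hdiffsum.abs.tsum_le_tsum _ ((hsumtailg).add (hMps.add hsumhead))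
      intro k
      rw [← mul_sub, abs_mul]
      by_cases h : M < k
      · simp only [h, if_true, add_zero]
        calc |w k| * |g n k - p k| ≤ (k:ℝ)^3 * |g n k - p k| :=
              mul_le_mul_of_nonneg_right (hw k) (abs_nonneg _)
          _ ≤ (k:ℝ)^3 * (g n k + p k) := by
              apply mul_le_mul_of_nonneg_left _ (by positivity)
              calc |g n k - p k| ≤ |g n k| + |p k| := abs_sub _ _
                _ = g n k + p k := by
                    rw [abs_of_nonneg (hgnonneg n k), abs_of_nonneg (hppos k)]
          _ = (k:ℝ)^3 * g n k + (k:ℝ)^3 * p k := by ring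
      · simp [h]
    have step3 : ∑' k, ((if M < k then (k : ℝ)^3 * g n k else 0) +
               ((if M < k then (k : ℝ)^3 * p k else 0) +
                (if M < k then 0 else |w k| * |g n k - p k|)))
        = (∑' k, (if M < k then (k : ℝ)^3 * g n k else 0)) +
          ((∑' k, (if M < k then (k : ℝ)^3 * p k else 0)) +
           (∑' k, (if M < k then (0:ℝ) else |w k| * |g n k - p k|))) := by
      rw [Summable.tsum_add hsumtailg (hMps.add hsumhead), Summable.tsum_add hMps hsumhead]
    have e3 : (∑' k, (if M < k then (0:ℝ) else |w k| * |g n k - p k|)) =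
        ∑ k ∈ Finset.range (M+1), (if M < k then (0:ℝ) else |w k| * |g n k - p k|) := by
      apply tsum_eq_sum
      intro b hb
      have : M < b := by simpa using hb
      simp [this]
    have hfinal := hN n hn
    calc |∑' k, w k * g n k - ∑' k, w k * p k|
        ≤ (∑' k, (if M < k then (k : ℝ)^3 * g n k else 0)) +
          ((∑' k, (if M < k then (k : ℝ)^3 * p k else 0)) +
           (∑' k, (if M < k then (0:ℝ) else |w k| * |g n k - p k|))) := by
          rw [← step3]; exact step1.trans step2
      _ < ε := by
          rw [e3]
          have := hMg n
          linarith
  apply hmain.congr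
  intro n
  exact (hrw n).symm


/-- Remark 2.9: under (D1) and (D2), with
`R₀ = (β_n/(ρ_n+β_n)) Σ_k (k−1)k n_S(k) / Σ_k k n_k`:
if α_n → 0 then ρ_n/β_n = O(1), Σ_k k n_k = O(n_S) with Σ_k k n_k/n_S also
bounded below by a positive constant, R₀ → 1, and
α_n = (1+o(1)) λ₂ (R₀−1), so (R₀−1)/α_n is bounded above and below by positive
constants; conversely, if R₀ → 1 then α_n → 0. -/
theorem basic_reproductive_ratio_vs_alpha
    -- degree data
    (nS : ℕ → ℕ) (hnSpos : ∀ n, 0 < nS n)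
    (nSk nk : ℕ → ℕ → ℕ) (hle : ∀ n k, nSk n k ≤ nk n k)
    (hfin : ∀ n, (Function.support (nk n)).Finite)
    (hnS : ∀ n, (nS n : ℝ) = ∑' k : ℕ, (nSk n k : ℝ))
    -- rates
    (ρ β : ℕ → ℝ) (hρ : ∀ n, 0 ≤ ρ n) (hβ : ∀ n, 0 < β n)
    -- α_n
    (α : ℕ → ℝ)
    (hα : ∀ n, α n =
      -(1 + ρ n / β n) * (∑' k : ℕ, (k : ℝ) * (nk n k : ℝ)) / (nS n : ℝ)
        + (∑' k : ℕ, (k : ℝ) * ((k : ℝ) - 1) * (nSk n k : ℝ)) / (nS n : ℝ))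
    -- the basic reproductive ratio R₀
    (R₀ : ℕ → ℝ)
    (hR₀ : ∀ n, R₀ n = β n / (ρ n + β n) *
      ((∑' k : ℕ, ((k : ℝ) - 1) * (k : ℝ) * (nSk n k : ℝ))
        / ∑' k : ℕ, (k : ℝ) * (nk n k : ℝ)))
    -- limiting degree distribution
    (p : ℕ → ℝ) (hppos : ∀ k, 0 ≤ p k) (hpsum : HasSum p 1)
    (lam lam2 : ℝ)
    (hlam : lam = ∑' k : ℕ, (k : ℝ) * p k)
    (hlam2 : lam2 = ∑' k : ℕ, (k : ℝ) * ((k : ℝ) - 1) * p k)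
    (hmean : Summable fun k : ℕ => (k : ℝ) * p k) (hlampos : 0 < lam)
    -- (D1)
    (hD1 : ∀ k, Tendsto (fun n => (nSk n k : ℝ) / (nS n : ℝ)) atTop (𝓝 (p k)))
    -- (D2)
    (hD2 : ∀ ε : ℝ, 0 < ε → ∃ M : ℕ, ∀ n,
      (∑' k : ℕ, if M < k then (k : ℝ) ^ 3 * (nSk n k : ℝ) else 0) / (nS n : ℝ) < ε) :
    -- forward direction: α_n → 0 implies all of the following
    (Tendsto α atTop (𝓝 0) →
      -- ρ_n/β_n = O(1)
      ((fun n => ρ n / β n) =O[atTop] fun _ => (1 : ℝ)) ∧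
      -- Σ_k k n_k = O(n_S)
      ((fun n => ∑' k : ℕ, (k : ℝ) * (nk n k : ℝ)) =O[atTop] fun n => (nS n : ℝ)) ∧
      -- Σ_k k n_k/n_S is bounded below by a positive constant
      (∃ c : ℝ, 0 < c ∧ ∀ᶠ n in atTop,
        c ≤ (∑' k : ℕ, (k : ℝ) * (nk n k : ℝ)) / (nS n : ℝ)) ∧
      -- R₀ → 1
      Tendsto R₀ atTop (𝓝 1) ∧
      -- α_n = (1 + o(1)) λ₂ (R₀ − 1)
      ((fun n => α n - lam2 * (R₀ n - 1)) =o[atTop] fun n => R₀ n - 1) ∧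
      -- (R₀ − 1)/α_n is bounded above and below by positive constants
      (∃ c C : ℝ, 0 < c ∧ ∀ᶠ n in atTop,
        c * |α n| ≤ |R₀ n - 1| ∧ |R₀ n - 1| ≤ C * |α n|)) ∧
    -- converse: R₀ → 1 implies α_n → 0
    (Tendsto R₀ atTop (𝓝 1) → Tendsto α atTop (𝓝 0)) := by
    -- basic positivity
  have hnSR : ∀ n, (0:ℝ) < (nS n : ℝ) := fun n => by exact_mod_cast hnSpos n
  have hnSne : ∀ n, (nS n : ℝ) ≠ 0 := fun n => ne_of_gt (hnSR n)
  have hβne : ∀ n, β n ≠ 0 := fun n => ne_of_gt (hβ n)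
  have hρβ : ∀ n, ρ n + β n ≠ 0 := fun n => ne_of_gt (by linarith [hρ n, hβ n])
  have hbge1 : ∀ n, (1:ℝ) ≤ 1 + ρ n / β n := fun n => by
    have := div_nonneg (hρ n) (hβ n).le; linarith
  have hbpos : ∀ n, (0:ℝ) < 1 + ρ n / β n := fun n => lt_of_lt_of_le one_pos (hbge1 n)
  -- finite supports
  have hfinS : ∀ n, (Function.support fun k => (nSk n k : ℝ)).Finite := by
    intro n
    apply Set.Finite.subset (hfin n)
    intro k hk
    simp only [Function.mem_support] at hk ⊢
    intro h0
    have : nSk n k = 0 := Nat.le_antisymm (h0 ▸ hle n k) (Nat.zero_le _)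
    simp [this] at hk
  have hsummulK : ∀ (u : ℕ → ℝ) n, Summable (fun k => u k * (nk n k : ℝ)) := by
    intro u n
    apply summable_of_support_finite
    apply Set.Finite.subset (hfin n)
    intro k hk
    simp only [Function.mem_support] at hk ⊢
    intro h0; simp [h0] at hk
  have hsummulS : ∀ (u : ℕ → ℝ) n, Summable (fun k => u k * (nSk n k : ℝ)) := by
    intro u n
    apply summable_of_support_finite
    apply Set.Finite.subset (hfinS n)
    intro k hk
    simp only [Function.mem_support] at hk ⊢
    intro h0; simp [h0] at hk
  -- weight bounds
  have hwk : ∀ k : ℕ, |(k:ℝ)| ≤ (k:ℝ)^3 := by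
    intro k
    rw [abs_of_nonneg (Nat.cast_nonneg k)]
    rcases Nat.eq_zero_or_pos k with h | h
    · simp [h]
    · have h1 : (1:ℝ) ≤ (k:ℝ) := by exact_mod_cast h
      exact le_self_pow₀ h1 (by norm_num)
  have hwk2 : ∀ k : ℕ, |(k:ℝ) * ((k:ℝ) - 1)| ≤ (k:ℝ)^3 := by
    intro k
    rcases Nat.eq_zero_or_pos k with h | h
    · simp [h]
    · have h1 : (1:ℝ) ≤ (k:ℝ) := by exact_mod_cast h
      rw [abs_of_nonneg (by nlinarith)]
      nlinarith [sq_nonneg (k:ℝ), sq_nonneg ((k:ℝ)-1)]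
  -- limits from (D1),(D2)
  have hS : Tendsto (fun n => (∑' k : ℕ, (k : ℝ) * (nSk n k : ℝ)) / (nS n : ℝ))
      atTop (𝓝 lam) := by
    rw [hlam]
    exact weighted_tendsto nS hnSpos nSk hfinS p hppos hD1 hD2 (fun k => (k:ℝ)) hwk
  have hA : Tendsto (fun n => (∑' k : ℕ, (k : ℝ) * ((k:ℝ) - 1) * (nSk n k : ℝ)) / (nS n : ℝ))
      atTop (𝓝 lam2) := by
    rw [hlam2]
    exact weighted_tendsto nS hnSpos nSk hfinS p hppos hD1 hD2
      (fun k => (k:ℝ) * ((k:ℝ) - 1)) hwk2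
  -- comparison S ≤ T
  have hST : ∀ n, (∑' k : ℕ, (k : ℝ) * (nSk n k : ℝ)) ≤ ∑' k : ℕ, (k : ℝ) * (nk n k : ℝ) := by
    intro n
    apply (hsummulS (fun k => (k:ℝ)) n).tsum_le_tsum _ (hsummulK (fun k => (k:ℝ)) n)
    intro k
    have : (nSk n k : ℝ) ≤ (nk n k : ℝ) := by exact_mod_cast hle n k
    exact mul_le_mul_of_nonneg_left this (Nat.cast_nonneg k)
  have hTnonneg : ∀ n, 0 ≤ ∑' k : ℕ, (k : ℝ) * (nk n k : ℝ) := by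
    intro n
    apply tsum_nonneg
    intro k
    positivity
  -- α identity
  have hαid : ∀ n, α n = (∑' k : ℕ, (k : ℝ) * ((k:ℝ) - 1) * (nSk n k : ℝ)) / (nS n : ℝ)
      - (1 + ρ n / β n) * (∑' k : ℕ, (k : ℝ) * (nk n k : ℝ)) / (nS n : ℝ) := by
    intro n
    rw [hα n]; ring
  -- the key identity R₀ * Q = A/nS whenever T > 0
  have hident : ∀ n, 0 < (∑' k : ℕ, (k : ℝ) * (nk n k : ℝ)) →
      R₀ n * ((1 + ρ n / β n) * (∑' k : ℕ, (k : ℝ) * (nk n k : ℝ)) / (nS n : ℝ))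
        = (∑' k : ℕ, (k : ℝ) * ((k:ℝ) - 1) * (nSk n k : ℝ)) / (nS n : ℝ) := by
    intro n hT
    have hAeq : (∑' k : ℕ, ((k : ℝ) - 1) * (k : ℝ) * (nSk n k : ℝ))
        = ∑' k : ℕ, (k : ℝ) * ((k:ℝ) - 1) * (nSk n k : ℝ) := by
      apply tsum_congr; intro k; ring
    rw [hR₀ n, hAeq]
    have hTne : (∑' k : ℕ, (k : ℝ) * (nk n k : ℝ)) ≠ 0 := ne_of_gt hT
    field_simp [hβne n, hρβ n, hnSne n]
    ring
  -- eventually T/nS is large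
  have hevS : ∀ᶠ n in atTop, lam / 2 < (∑' k : ℕ, (k : ℝ) * (nSk n k : ℝ)) / (nS n : ℝ) :=
    hS.eventually (eventually_gt_nhds (by linarith))
  have hevT : ∀ᶠ n in atTop,
      lam / 2 < (∑' k : ℕ, (k : ℝ) * (nk n k : ℝ)) / (nS n : ℝ) := by
    filter_upwards [hevS] with n hn
    calc lam / 2 < (∑' k : ℕ, (k : ℝ) * (nSk n k : ℝ)) / (nS n : ℝ) := hn
      _ ≤ (∑' k : ℕ, (k : ℝ) * (nk n k : ℝ)) / (nS n : ℝ) := by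
          exact (div_le_div_iff_of_pos_right (hnSR n)).mpr (hST n)
  -- eventually T > 0
  have hevTpos : ∀ᶠ n in atTop, 0 < (∑' k : ℕ, (k : ℝ) * (nk n k : ℝ)) := by
    filter_upwards [hevT] with n hn
    have h0 : 0 < (∑' k : ℕ, (k : ℝ) * (nk n k : ℝ)) / (nS n : ℝ) := by linarith
    by_contra hc
    push_neg at hc
    have : (∑' k : ℕ, (k : ℝ) * (nk n k : ℝ)) = 0 := le_antisymm hc (hTnonneg n)
    rw [this] at h0
    simp at h0
  constructor
  · -- forward direction
    intro hα0
    -- Q tends to lam2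
    have hQ : Tendsto (fun n =>
        (1 + ρ n / β n) * (∑' k : ℕ, (k : ℝ) * (nk n k : ℝ)) / (nS n : ℝ))
        atTop (𝓝 lam2) := by
      have h := hA.sub hα0
      rw [sub_zero] at h
      apply h.congr
      intro n
      have := hαid n
      linarith
    -- lam2 > 0
    have hQlow : ∀ᶠ n in atTop, lam / 2 ≤
        (1 + ρ n / β n) * (∑' k : ℕ, (k : ℝ) * (nk n k : ℝ)) / (nS n : ℝ) := by
      filter_upwards [hevT] with n hn
      have h1 : (∑' k : ℕ, (k : ℝ) * (nk n k : ℝ)) / (nS n : ℝ) ≤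
          (1 + ρ n / β n) * ((∑' k : ℕ, (k : ℝ) * (nk n k : ℝ)) / (nS n : ℝ)) :=
        le_mul_of_one_le_left (div_nonneg (hTnonneg n) (hnSR n).le) (hbge1 n)
      rw [← mul_div_assoc] at h1
      linarith
    have hlam2pos : 0 < lam2 := by
      have := ge_of_tendsto hQ hQlow
      linarith
    have hlam2ne : lam2 ≠ 0 := ne_of_gt hlam2pos
    -- eventual bundle
    have hevQub : ∀ᶠ n in atTop,
        (1 + ρ n / β n) * (∑' k : ℕ, (k : ℝ) * (nk n k : ℝ)) / (nS n : ℝ) < lam2 + 1 :=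
      hQ.eventually (eventually_lt_nhds (by linarith))
    have hevQlb : ∀ᶠ n in atTop, lam2 / 2 <
        (1 + ρ n / β n) * (∑' k : ℕ, (k : ℝ) * (nk n k : ℝ)) / (nS n : ℝ) :=
      hQ.eventually (eventually_gt_nhds (by linarith))
    have hevQub2 : ∀ᶠ n in atTop,
        (1 + ρ n / β n) * (∑' k : ℕ, (k : ℝ) * (nk n k : ℝ)) / (nS n : ℝ) < 2 * lam2 :=
      hQ.eventually (eventually_lt_nhds (by linarith))
    -- eventual identity α = Q (R₀ - 1) and R₀ = 1 + α/Q
    have hevid : ∀ᶠ n in atTop,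
        α n = ((1 + ρ n / β n) * (∑' k : ℕ, (k : ℝ) * (nk n k : ℝ)) / (nS n : ℝ)) *
          (R₀ n - 1) := by
      filter_upwards [hevTpos] with n hT
      have h1 := hident n hT
      have h2 := hαid n
      nlinarith [h1, h2]
    refine ⟨?_, ?_, ?_, ?_, ?_, ?_⟩
    · -- ρ/β = O(1)
      rw [isBigO_iff]
      refine ⟨(lam2 + 1) / (lam / 2), ?_⟩
      filter_upwards [hevT, hevQub] with n h1 h2
      have hQn : (1 + ρ n / β n) * ((∑' k : ℕ, (k : ℝ) * (nk n k : ℝ)) / (nS n : ℝ)) <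
          lam2 + 1 := by rw [← mul_div_assoc]; linarith
      have hb : (1 + ρ n / β n) * (lam / 2) ≤ lam2 + 1 := by
        nlinarith [hbpos n]
      have hrb : ρ n / β n ≤ (lam2 + 1) / (lam / 2) := by
        rw [le_div_iff₀ (by linarith)]
        nlinarith
      rw [Real.norm_eq_abs, norm_one, mul_one,
        abs_of_nonneg (div_nonneg (hρ n) (hβ n).le)]
      exact hrb
    · -- T = O(nS)
      rw [isBigO_iff]
      refine ⟨lam2 + 1, ?_⟩
      filter_upwards [hevQub] with n h2
      have h1 : (∑' k : ℕ, (k : ℝ) * (nk n k : ℝ)) / (nS n : ℝ) ≤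
          (1 + ρ n / β n) * ((∑' k : ℕ, (k : ℝ) * (nk n k : ℝ)) / (nS n : ℝ)) :=
        le_mul_of_one_le_left (div_nonneg (hTnonneg n) (hnSR n).le) (hbge1 n)
      rw [← mul_div_assoc] at h1
      have h3 : (∑' k : ℕ, (k : ℝ) * (nk n k : ℝ)) / (nS n : ℝ) ≤ lam2 + 1 := by linarith
      rw [Real.norm_eq_abs, Real.norm_eq_abs, abs_of_nonneg (hTnonneg n),
        abs_of_nonneg (hnSR n).le]
      rw [div_le_iff₀ (hnSR n)] at h3
      exact h3
    · -- lower bound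
      refine ⟨lam / 2, by linarith, ?_⟩
      filter_upwards [hevT] with n hn
      exact hn.le
    · -- R₀ → 1
      have hdiv : Tendsto (fun n => α n /
          ((1 + ρ n / β n) * (∑' k : ℕ, (k : ℝ) * (nk n k : ℝ)) / (nS n : ℝ)))
          atTop (𝓝 0) := by
        have := hα0.div hQ hlam2ne; rw [zero_div] at this; exact this
      have h1 : Tendsto (fun n => 1 + α n /
          ((1 + ρ n / β n) * (∑' k : ℕ, (k : ℝ) * (nk n k : ℝ)) / (nS n : ℝ)))
          atTop (𝓝 1) := by
        have := hdiv.const_add 1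
        rwa [add_zero] at this
      apply h1.congr'
      filter_upwards [hevid, hevQlb, hevTpos] with n hid hQlb hT
      have hQpos : 0 < (1 + ρ n / β n) * (∑' k : ℕ, (k : ℝ) * (nk n k : ℝ)) / (nS n : ℝ) := by
        linarith
      have hcancel : ((1 + ρ n / β n) * (∑' k : ℕ, (k : ℝ) * (nk n k : ℝ)) / (nS n : ℝ))
          * (R₀ n - 1) / ((1 + ρ n / β n) * (∑' k : ℕ, (k : ℝ) * (nk n k : ℝ)) / (nS n : ℝ))
          = R₀ n - 1 := by
        rw [mul_comm, mul_div_assoc, div_self (ne_of_gt hQpos), mul_one]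
      rw [hid, hcancel]
      ring
    · -- little-o
      have hsmall : Tendsto (fun n =>
          (1 + ρ n / β n) * (∑' k : ℕ, (k : ℝ) * (nk n k : ℝ)) / (nS n : ℝ) - lam2)
          atTop (𝓝 0) := by
        simpa using hQ.sub_const lam2
      have h1 : (fun n =>
          (1 + ρ n / β n) * (∑' k : ℕ, (k : ℝ) * (nk n k : ℝ)) / (nS n : ℝ) - lam2)
          =o[atTop] (fun _ => (1:ℝ)) := (isLittleO_one_iff ℝ).mpr hsmall
      have h2 := h1.mul_isBigO (isBigO_refl (fun n => R₀ n - 1) atTop)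
      apply h2.congr'
      · filter_upwards [hevid] with n hid
        rw [hid]
        ring
      · filter_upwards with n
        rw [one_mul]
    · -- two-sided bounds
      refine ⟨1 / (2 * lam2), 2 / lam2, by positivity, ?_⟩
      filter_upwards [hevid, hevQlb, hevQub2, hevTpos] with n hid hlb hub hT
      have hQpos : 0 < (1 + ρ n / β n) * (∑' k : ℕ, (k : ℝ) * (nk n k : ℝ)) / (nS n : ℝ) := by
        linarith
      have habs : |α n| =
          ((1 + ρ n / β n) * (∑' k : ℕ, (k : ℝ) * (nk n k : ℝ)) / (nS n : ℝ)) *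
            |R₀ n - 1| := by
        rw [hid, abs_mul, abs_of_nonneg hQpos.le]
      constructor
      · rw [habs, div_mul_eq_mul_div, div_le_iff₀ (by positivity)]
        nlinarith [abs_nonneg (R₀ n - 1)]
      · rw [habs]
        rw [div_mul_eq_mul_div, le_div_iff₀ hlam2pos]
        nlinarith [abs_nonneg (R₀ n - 1)]
  · -- converse
    intro hR1
    have hevR : ∀ᶠ n in atTop, (1:ℝ)/2 < R₀ n :=
      hR1.eventually (eventually_gt_nhds (by norm_num))
    have hAoverR : Tendsto (fun n =>
        (∑' k : ℕ, (k : ℝ) * ((k:ℝ) - 1) * (nSk n k : ℝ)) / (nS n : ℝ)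
        - ((∑' k : ℕ, (k : ℝ) * ((k:ℝ) - 1) * (nSk n k : ℝ)) / (nS n : ℝ)) / R₀ n)
        atTop (𝓝 0) := by
      have h := hA.sub (hA.div hR1 one_ne_zero)
      simpa using h
    apply hAoverR.congr'
    filter_upwards [hevTpos, hevR] with n hT hR
    have hRne : R₀ n ≠ 0 := by linarith
    have h1 := hident n hT
    have hQeq : (1 + ρ n / β n) * (∑' k : ℕ, (k : ℝ) * (nk n k : ℝ)) / (nS n : ℝ)
        = ((∑' k : ℕ, (k : ℝ) * ((k:ℝ) - 1) * (nSk n k : ℝ)) / (nS n : ℝ)) / R₀ n := by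
      rw [eq_div_iff hRne, mul_comm]
      exact h1
    rw [hαid n, hQeq]
end
end
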